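/- arXiv:2112.00381 — 7 statements merged into one kernel-verified Lean document; each statement's English description precedes it below -/
import Mathlib

section
/- Let n ≥ 1, let a, b ∈ ℂⁿ, set G_j := 1 + Σ_{k=j}^n a_k b_k for 1 ≤ j ≤ n+1 (so G_{n+1} = 1), and suppose s_1, …, s_{n+1} ∈ ℂ are nonzero with s_j² = G_j and s_{n+1} = 1. Define the upper-triangular n×n matrix g₊ by (g₊)_{jj} = s_j/s_{j+1}, (g₊)_{jk} = a_j b_k/(s_k s_{k+1}) for j < k, (g₊)_{jk} = 0 for j > k, and the lower-triangular n×n matrix k by k_{jj} = s_j/s_{j+1}, k_{jk} = a_j b_k/(s_j s_{j+1}) for j > k, k_{jk} = 0 for j < k. Then g₊ · k = 1ₙ + a bᵀ, where (a bᵀ)_{jl} = a_j b_l. In particular, writing g₋ := k⁻¹ (k is invertible since its diagonal entries are nonzero), one has 1ₙ + a bᵀ = g₊ g₋⁻¹. -/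
open Matrix BigOperators

noncomputable section

attribute [local instance] Matrix.normedAddCommGroup Matrix.normedSpace

/-- complex-valued sign of an integer, with `csgn 0 = 0`. -/
def csgn (m : ℤ) : ℂ := (m.sign : ℂ)

/-- Kronecker delta with values in `ℂ`. -/
def cdelta {K : Type*} [DecidableEq K] (i j : K) : ℂ := if i = j then 1 else 0

private lemma sum_split' {n : ℕ} (i : Fin n) (f : Fin n → ℂ) :
    (∑ m : Fin n, if (i:ℕ) ≤ (m:ℕ) then f m else 0)
      = f i + ∑ m : Fin n, if (i:ℕ) + 1 ≤ (m:ℕ) then f m else 0 := by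
  have key : ∀ m : Fin n, (if (i:ℕ) ≤ (m:ℕ) then f m else 0)
      = (if m = i then f m else 0) + (if (i:ℕ) + 1 ≤ (m:ℕ) then f m else 0) := by
    intro m
    rcases eq_or_ne m i with rfl | hne
    · simp
    · have hv : (m:ℕ) ≠ (i:ℕ) := fun h => hne (Fin.ext h)
      rw [if_neg hne]
      split_ifs <;> first | omega | ring
  rw [Finset.sum_congr rfl fun m _ => key m, Finset.sum_add_distrib,
    Finset.sum_ite_eq' Finset.univ i f]
  simp

/-- the factorization identity `g₊ · k = 1ₙ + a bᵀ` and, with `g₋ := k⁻¹`,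
`1ₙ + a bᵀ = g₊ g₋⁻¹`. -/
theorem statement0 (n : ℕ) (hn : 1 ≤ n) (a b : Fin n → ℂ) (s : Fin (n + 1) → ℂ)
    (hs0 : ∀ j, s j ≠ 0)
    (hsq : ∀ j, s j ^ 2 = 1 + ∑ k : Fin n, (if (j : ℕ) ≤ (k : ℕ) then a k * b k else 0))
    (hlast : s (Fin.last n) = 1)
    (gp km : Matrix (Fin n) (Fin n) ℂ)
    (hgp : ∀ j k, gp j k =
      if j = k then s j.castSucc / s j.succ
      else if j < k then a j * b k / (s k.castSucc * s k.succ) else 0)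
    (hkm : ∀ j k, km j k =
      if j = k then s j.castSucc / s j.succ
      else if k < j then a j * b k / (s j.castSucc * s j.succ) else 0) :
    gp * km = 1 + Matrix.vecMulVec a b ∧
      1 + Matrix.vecMulVec a b = gp * (km⁻¹)⁻¹ := by
  -- the step identity
  have hstep : ∀ m : Fin n, s m.castSucc ^ 2 = s m.succ ^ 2 + a m * b m := by
    intro m
    rw [hsq, hsq]
    have := sum_split' m (fun k => a k * b k)
    simp only [Fin.coe_castSucc, Fin.val_succ]
    rw [this]
    ring
  -- telescoping sums
  have hT : ∀ j : Fin (n + 1),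
      (∑ m : Fin n, if (j:ℕ) ≤ (m:ℕ) then a m * b m / (s m.castSucc ^ 2 * s m.succ ^ 2) else 0)
      = 1 - 1 / s j ^ 2 := by
    intro j
    induction j using Fin.reverseInduction with
    | last =>
        rw [Finset.sum_eq_zero, hlast]
        · norm_num
        · intro m _
          rw [if_neg]
          simp only [Fin.val_last]
          omega
    | cast i ih =>
        have hss := sum_split' i (fun m => a m * b m / (s m.castSucc ^ 2 * s m.succ ^ 2))
        simp only [Fin.val_succ] at ih
        simp only [Fin.coe_castSucc]
        have h1 : s i.castSucc ^ 2 ≠ 0 := pow_ne_zero _ (hs0 _)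
        have h2 : s i.succ ^ 2 ≠ 0 := pow_ne_zero _ (hs0 _)
        have h3 := hstep i
        have key : a i * b i / (s i.castSucc ^ 2 * s i.succ ^ 2)
            = 1 / s i.succ ^ 2 - 1 / s i.castSucc ^ 2 := by
          have := hs0 i.castSucc
          have := hs0 i.succ
          field_simp
          linear_combination -h3
        rw [hss, key, ih]
        ring
  -- the main product identity
  have hmain : gp * km = 1 + Matrix.vecMulVec a b := by
    ext j l
    rw [Matrix.mul_apply]
    have hsplit : ∀ (p : Fin n) (c x : ℂ),
        (∀ m : Fin n, gp j m * km m l =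
          (if m = p then c else 0) +
          (if (p:ℕ) + 1 ≤ (m:ℕ) then x * (a m * b m / (s m.castSucc ^ 2 * s m.succ ^ 2)) else 0)) →
        (∑ m, gp j m * km m l) = c + x * (1 - 1 / s p.succ ^ 2) := by
      intro p c x h
      rw [Finset.sum_congr rfl fun m _ => h m, Finset.sum_add_distrib,
        Finset.sum_ite_eq' Finset.univ p (fun _ => c)]
      simp only [Finset.mem_univ, if_true]
      congr 1
      rw [← hT p.succ, Finset.mul_sum]
      refine Finset.sum_congr rfl fun m _ => ?_
      simp only [Fin.val_succ]
      split_ifs <;> ring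
    have RHS : (1 + Matrix.vecMulVec a b) j l = (if j = l then 1 else 0) + a j * b l := by
      simp [Matrix.one_apply, Matrix.vecMulVec_apply]
    rw [RHS]
    have hj2 : ∀ i : Fin n, s (Fin.succ i) ^ 2 ≠ 0 := fun i => pow_ne_zero _ (hs0 _)
    rcases lt_trichotomy j l with h | h | h
    · -- j < l
      rw [hsplit l (a j * b l / s l.succ ^ 2) (a j * b l) ?_]
      · rw [if_neg (ne_of_lt h)]
        have := hj2 l
        field_simp
        ring
      · intro m
        rw [hgp, hkm]
        have hjl : (j:ℕ) < (l:ℕ) := h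
        simp only [Fin.lt_def, Fin.ext_iff]
        split_ifs <;>
          first
            | omega
            | ring1
            | (have hm : m = l := Fin.ext (by omega); subst hm;
               field_simp [hs0]; ring1)
            | (field_simp [hs0]; ring1)
    · -- j = l
      subst h
      rw [hsplit j (s j.castSucc ^ 2 / s j.succ ^ 2) (a j * b j) ?_]
      · rw [if_pos rfl, hstep j]
        have := hj2 j
        have := hs0 j.succ
        field_simp
        ring
      · intro m
        rw [hgp, hkm]
        simp only [Fin.lt_def, Fin.ext_iff]
        split_ifs <;>
          first
            | omega
            | ring1
            | (have hm : m = j := Fin.ext (by omega); subst hm;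
               field_simp [hs0]; ring1)
            | (field_simp [hs0]; ring1)
    · -- l < j
      rw [hsplit j (a j * b l / s j.succ ^ 2) (a j * b l) ?_]
      · rw [if_neg (ne_of_gt h)]
        have := hj2 j
        field_simp
        ring
      · intro m
        rw [hgp, hkm]
        have hjl : (l:ℕ) < (j:ℕ) := h
        simp only [Fin.lt_def, Fin.ext_iff]
        split_ifs <;>
          first
            | omega
            | ring1
            | (have hm : m = j := Fin.ext (by omega); subst hm;
               field_simp [hs0]; ring1)
            | (field_simp [hs0]; ring1)
  refine ⟨hmain, ?_⟩
  -- km is invertible: lower triangular with nonzero diagonal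
  have hbt : km.BlockTriangular OrderDual.toDual := by
    intro i jj hij
    rw [hkm]
    have h1 : i ≠ jj := ne_of_lt hij
    have h2 : ¬ jj < i := not_lt_of_gt hij
    rw [if_neg h1, if_neg h2]
  have hdet : km.det = ∏ i, km i i := Matrix.det_of_lowerTriangular km hbt
  have hdet0 : IsUnit km.det := by
    rw [hdet]
    apply isUnit_iff_ne_zero.mpr
    apply Finset.prod_ne_zero_iff.mpr
    intro i _
    rw [hkm, if_pos rfl]
    exact div_ne_zero (hs0 _) (hs0 _)
  rw [Matrix.nonsing_inv_nonsing_inv km hdet0, hmain]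
end
end

section
/- Let n ≥ 1, d ≥ 1, and for each α ∈ {1,…,d} let (a^α, b^α) ∈ ℂⁿ × ℂⁿ, set G_j^α := 1 + Σ_{k=j}^n a_k^α b_k^α (1 ≤ j ≤ n+1), and choose nonzero s_j^α ∈ ℂ with (s_j^α)² = G_j^α and s_{n+1}^α = 1. Let g₊,α and k_α be the associated upper- and lower-triangular matrices ((g₊,α)_{jj} = s_j^α/s_{j+1}^α, (g₊,α)_{jk} = a_j^α b_k^α/(s_k^α s_{k+1}^α) for j < k; (k_α)_{jj} = s_j^α/s_{j+1}^α, (k_α)_{jk} = a_j^α b_k^α/(s_j^α s_{j+1}^α) for j > k; zero otherwise). Define the column vectors A^α := g₊,1 ⋯ g₊,α−1 a^α and the row vectors B^α := (b^α)ᵀ k_{α−1} ⋯ k_1 (empty products equal 1ₙ). Then for every α ∈ {1,…,d}: 1ₙ + Σ_{μ=1}^α A^μ B^μ = (g₊,1 ⋯ g₊,α)(k_α ⋯ k_1), where A^μ B^μ is the n×n product of the column A^μ with the row B^μ. In particular, for α = d, if A is the n×d matrix with columns A^α and B is the d×n matrix with rows B^α, then 1ₙ + A B = (g₊,1 ⋯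 g₊,d)(k_d ⋯ k_1). -/
open Matrix BigOperators

noncomputable section

attribute [local instance] Matrix.normedAddCommGroup Matrix.normedSpace

private lemma split_le_sum {n : ℕ} (i : Fin n) (f : Fin n → ℂ) :
    ∑ l : Fin n, (if (i : ℕ) ≤ (l : ℕ) then f l else 0)
      = f i + ∑ l : Fin n, (if (i : ℕ) + 1 ≤ (l : ℕ) then f l else 0) := by
  have h : ∀ l : Fin n, (if (i : ℕ) ≤ (l : ℕ) then f l else 0)
      = (if l = i then f i else 0) + (if (i : ℕ) + 1 ≤ (l : ℕ) then f l else 0) := by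
    intro l
    by_cases h1 : l = i
    · subst h1; simp
    · have hne : (l : ℕ) ≠ (i : ℕ) := fun hc => h1 (Fin.ext hc)
      by_cases h2 : (i : ℕ) ≤ (l : ℕ)
      · have h3 : (i : ℕ) + 1 ≤ (l : ℕ) := by omega
        simp [h1, h2, h3]
      · have h3 : ¬ ((i : ℕ) + 1 ≤ (l : ℕ)) := by omega
        simp [h1, h2, h3]
  simp_rw [h, Finset.sum_add_distrib, Finset.sum_ite_eq' Finset.univ i, Finset.mem_univ, if_true]

private lemma tele {n : ℕ} (a b : Fin n → ℂ) (s : Fin (n + 1) → ℂ)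
    (hs0 : ∀ j, s j ≠ 0)
    (hsq : ∀ j, s j ^ 2 = 1 + ∑ k : Fin n, (if (j : ℕ) ≤ (k : ℕ) then a k * b k else 0))
    (hlast : s (Fin.last n) = 1) (j : Fin (n + 1)) :
    ∑ l : Fin n, (if (j : ℕ) ≤ (l : ℕ) then a l * b l / (s l.castSucc ^ 2 * s l.succ ^ 2) else 0)
      = 1 - 1 / s j ^ 2 := by
  induction j using Fin.reverseInduction with
  | last =>
      rw [hlast]
      rw [Finset.sum_eq_zero]
      · norm_num
      intro l _
      have : ¬ ((Fin.last n : ℕ) ≤ (l : ℕ)) := by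
        simpa [Fin.last] using l.isLt
      simp [this]
  | cast i ih =>
      have hG : s i.castSucc ^ 2 = s i.succ ^ 2 + a i * b i := by
        rw [hsq, hsq]
        have h := split_le_sum i (fun k => a k * b k)
        simp only [Fin.coe_castSucc, Fin.val_succ]
        rw [h]; ring
      have h2 : s i.succ ^ 2 ≠ 0 := pow_ne_zero _ (hs0 _)
      have h1 : s i.succ ^ 2 + a i * b i ≠ 0 := hG ▸ pow_ne_zero _ (hs0 _)
      simp only [Fin.coe_castSucc]
      rw [split_le_sum i (fun l => a l * b l / (s l.castSucc ^ 2 * s l.succ ^ 2))]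
      simp only [Fin.val_succ] at ih
      rw [ih, hG]
      have h3 := hs0 i.succ
      field_simp
      ring

private lemma key {n : ℕ} (a b : Fin n → ℂ) (s : Fin (n + 1) → ℂ)
    (hs0 : ∀ j, s j ≠ 0)
    (hsq : ∀ j, s j ^ 2 = 1 + ∑ k : Fin n, (if (j : ℕ) ≤ (k : ℕ) then a k * b k else 0))
    (hlast : s (Fin.last n) = 1)
    (gp km : Matrix (Fin n) (Fin n) ℂ)
    (hgp : ∀ j k, gp j k = if j = k then s j.castSucc / s j.succ
      else if j < k then a j * b k / (s k.castSucc * s k.succ) else 0)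
    (hkm : ∀ j k, km j k = if j = k then s j.castSucc / s j.succ
      else if k < j then a j * b k / (s j.castSucc * s j.succ) else 0) :
    gp * km = 1 + Matrix.vecMulVec a b := by
  have htel : ∀ p : Fin (n + 1),
      ∑ l : Fin n, (if (p : ℕ) ≤ (l : ℕ)
          then a l * b l / (s l.castSucc ^ 2 * s l.succ ^ 2) else 0)
        = 1 - 1 / s p ^ 2 := tele a b s hs0 hsq hlast
  have hsum : ∀ (p : Fin n) (c : ℂ),
      ∑ l ∈ ({p}ᶜ : Finset (Fin n)), (if ((p : ℕ) + 1 ≤ (l : ℕ))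
          then c * (a l * b l / (s l.castSucc ^ 2 * s l.succ ^ 2)) else 0)
        = c * (1 - 1 / s p.succ ^ 2) := by
    intro p c
    set F := fun l : Fin n => (if ((p : ℕ) + 1 ≤ (l : ℕ))
        then c * (a l * b l / (s l.castSucc ^ 2 * s l.succ ^ 2)) else 0) with hF
    have h1 : ∑ l ∈ ({p}ᶜ : Finset (Fin n)), F l = ∑ l : Fin n, F l := by
      rw [Fintype.sum_eq_add_sum_compl p F]
      simp [hF]
    rw [h1]
    have h2 : ∀ l : Fin n, F l = c * (if ((p : ℕ) + 1 ≤ (l : ℕ))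
        then a l * b l / (s l.castSucc ^ 2 * s l.succ ^ 2) else 0) := by
      intro l
      rw [hF]
      by_cases hc : (p : ℕ) + 1 ≤ (l : ℕ)
      · simp only [hc, if_true]
      · simp only [hc, if_false, mul_zero]
    simp_rw [h2, ← Finset.mul_sum]
    have h3 := htel p.succ
    simp only [Fin.val_succ] at h3
    rw [h3]
  ext j k
  rw [Matrix.mul_apply]
  simp only [Matrix.add_apply, Matrix.one_apply, Matrix.vecMulVec_apply]
  rcases lt_trichotomy j k with hjk | hjk | hjk
  · -- j < k : pivot at k
    have hne : j ≠ k := ne_of_lt hjk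
    have hrest : ∀ l : Fin n, l ≠ k →
        gp j l * km l k = (if ((k : ℕ) + 1 ≤ (l : ℕ))
          then a j * b k * (a l * b l / (s l.castSucc ^ 2 * s l.succ ^ 2)) else 0) := by
      intro l hl
      rcases lt_trichotomy l k with h | h | h
      · have h1 : ¬ k < l := not_lt.mpr h.le
        have h2 : ¬ ((k : ℕ) + 1 ≤ (l : ℕ)) := by
          have := Fin.lt_iff_val_lt_val.mp h; omega
        rw [hkm, if_neg hl, if_neg h1, mul_zero, if_neg h2]
      · exact absurd h hl
      · have h1 : j < l := hjk.trans h
        have h2 : (k : ℕ) + 1 ≤ (l : ℕ) := Fin.lt_iff_val_lt_val.mp h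
        rw [hgp, if_neg (ne_of_lt h1), if_pos h1, hkm, if_neg (ne_of_gt h), if_pos h, if_pos h2]
        ring
    rw [Fintype.sum_eq_add_sum_compl k (fun l => gp j l * km l k),
      Finset.sum_congr rfl (fun l hl => hrest l
        (Finset.mem_compl.mp hl ∘ Finset.mem_singleton.mpr ∘ id)), hsum k (a j * b k),
      hgp, if_neg hne, if_pos hjk, hkm, if_pos rfl, if_neg hne]
    have h4 := hs0 k.castSucc
    have h5 := hs0 k.succ
    field_simp
    ring
  · -- j = k : pivot at j
    subst hjk
    have hG : s j.castSucc ^ 2 = s j.succ ^ 2 + a j * b j := by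
      rw [hsq, hsq]
      have h := split_le_sum j (fun k => a k * b k)
      simp only [Fin.coe_castSucc, Fin.val_succ]
      rw [h]; ring
    have hrest : ∀ l : Fin n, l ≠ j →
        gp j l * km l j = (if ((j : ℕ) + 1 ≤ (l : ℕ))
          then a j * b j * (a l * b l / (s l.castSucc ^ 2 * s l.succ ^ 2)) else 0) := by
      intro l hl
      rcases lt_trichotomy l j with h | h | h
      · have h1 : ¬ j < l := not_lt.mpr h.le
        have h2 : ¬ ((j : ℕ) + 1 ≤ (l : ℕ)) := by
          have := Fin.lt_iff_val_lt_val.mp h; omega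
        rw [hgp, if_neg (Ne.symm hl), if_neg h1, zero_mul, if_neg h2]
      · exact absurd h hl
      · have h2 : (j : ℕ) + 1 ≤ (l : ℕ) := Fin.lt_iff_val_lt_val.mp h
        rw [hgp, if_neg h.ne, if_pos h, hkm, if_neg h.ne', if_pos h, if_pos h2]
        ring
    rw [Fintype.sum_eq_add_sum_compl j (fun l => gp j l * km l j),
      Finset.sum_congr rfl (fun l hl => hrest l
        (Finset.mem_compl.mp hl ∘ Finset.mem_singleton.mpr ∘ id)), hsum j (a j * b j),
      hgp, if_pos rfl, hkm, if_pos rfl, if_pos rfl]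
    have h4 := hs0 j.castSucc
    have h5 := hs0 j.succ
    rw [div_mul_div_comm, ← pow_two, ← pow_two, hG]
    field_simp
    ring
  · -- k < j : pivot at j
    have hne : j ≠ k := ne_of_gt hjk
    have hrest : ∀ l : Fin n, l ≠ j →
        gp j l * km l k = (if ((j : ℕ) + 1 ≤ (l : ℕ))
          then a j * b k * (a l * b l / (s l.castSucc ^ 2 * s l.succ ^ 2)) else 0) := by
      intro l hl
      rcases lt_trichotomy l j with h | h | h
      · have h1 : ¬ j < l := not_lt.mpr h.le
        have h2 : ¬ ((j : ℕ) + 1 ≤ (l : ℕ)) := by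
          have := Fin.lt_iff_val_lt_val.mp h; omega
        rw [hgp, if_neg (Ne.symm hl), if_neg h1, zero_mul, if_neg h2]
      · exact absurd h hl
      · have h1 : k < l := hjk.trans h
        have h2 : (j : ℕ) + 1 ≤ (l : ℕ) := Fin.lt_iff_val_lt_val.mp h
        rw [hgp, if_neg h.ne, if_pos h, hkm, if_neg h1.ne', if_pos h1, if_pos h2]
        ring
    rw [Fintype.sum_eq_add_sum_compl j (fun l => gp j l * km l k),
      Finset.sum_congr rfl (fun l hl => hrest l
        (Finset.mem_compl.mp hl ∘ Finset.mem_singleton.mpr ∘ id)), hsum j (a j * b k),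
      hgp, if_pos rfl, hkm, if_neg hne, if_pos hjk, if_neg hne]
    have h4 := hs0 j.castSucc
    have h5 := hs0 j.succ
    field_simp
    ring

private lemma mul_vecMulVec' {n : ℕ} (M : Matrix (Fin n) (Fin n) ℂ) (u v : Fin n → ℂ) :
    M * Matrix.vecMulVec u v = Matrix.vecMulVec (M *ᵥ u) v := by
  ext i j
  simp [Matrix.mul_apply, Matrix.vecMulVec_apply, Matrix.mulVec, dotProduct,
    Finset.sum_mul, mul_assoc]

private lemma vecMulVec_mul' {n : ℕ} (N : Matrix (Fin n) (Fin n) ℂ) (u v : Fin n → ℂ) :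
    Matrix.vecMulVec u v * N = Matrix.vecMulVec u (v ᵥ* N) := by
  ext i j
  simp [Matrix.mul_apply, Matrix.vecMulVec_apply, Matrix.vecMul, dotProduct,
    Finset.mul_sum, mul_assoc]

private lemma sum_lt_succ {d : ℕ} {M : Type*} [AddCommMonoid M] (m : ℕ) (hm : m < d)
    (f : Fin d → M) :
    ∑ μ : Fin d, (if (μ : ℕ) < m + 1 then f μ else 0)
      = (∑ μ : Fin d, (if (μ : ℕ) < m then f μ else 0)) + f ⟨m, hm⟩ := by
  have h : ∀ μ : Fin d, (if (μ : ℕ) < m + 1 then f μ else 0)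
      = (if (μ : ℕ) < m then f μ else 0) + (if μ = ⟨m, hm⟩ then f ⟨m, hm⟩ else 0) := by
    intro μ
    by_cases h1 : μ = ⟨m, hm⟩
    · subst h1; simp
    · have hne : (μ : ℕ) ≠ m := fun hc => h1 (Fin.ext hc)
      by_cases h2 : (μ : ℕ) < m
      · have h3 : (μ : ℕ) < m + 1 := by omega
        simp [h1, h2, h3]
      · have h3 : ¬ ((μ : ℕ) < m + 1) := by omega
        simp [h1, h2, h3]
  simp_rw [h, Finset.sum_add_distrib, Finset.sum_ite_eq' Finset.univ (⟨m, hm⟩ : Fin d),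
    Finset.mem_univ, if_true]

private lemma take_finRange_succ {d m : ℕ} (hm : m < d) :
    (List.finRange d).take (m + 1) = (List.finRange d).take m ++ [⟨m, hm⟩] := by
  rw [← List.take_concat_get (l := List.finRange d) (i := m) (by simpa using hm)]
  simp [List.concat_eq_append]

/-- for each `α`, `1ₙ + Σ_{μ=1}^α A^μ B^μ = (g₊,1⋯g₊,α)(k_α⋯k_1)`; in particular
`1ₙ + A B = (g₊,1⋯g₊,d)(k_d⋯k_1)`. -/
theorem statement1 (n d : ℕ) (hn : 1 ≤ n) (hd : 1 ≤ d)
    (a b : Fin d → Fin n → ℂ) (s : Fin d → Fin (n + 1) → ℂ)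
    (hs0 : ∀ α j, s α j ≠ 0)
    (hsq : ∀ α j, s α j ^ 2 = 1 + ∑ k : Fin n, (if (j : ℕ) ≤ (k : ℕ) then a α k * b α k else 0))
    (hlast : ∀ α, s α (Fin.last n) = 1)
    (gp km : Fin d → Matrix (Fin n) (Fin n) ℂ)
    (hgp : ∀ α j k, gp α j k =
      if j = k then s α j.castSucc / s α j.succ
      else if j < k then a α j * b α k / (s α k.castSucc * s α k.succ) else 0)
    (hkm : ∀ α j k, km α j k =
      if j = k then s α j.castSucc / s α j.succ
      else if k < j then a α j * b α k / (s α j.castSucc * s α j.succ) else 0)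
    (A B : Fin d → Fin n → ℂ)
    (hA : ∀ α : Fin d, A α = (((List.finRange d).take (α : ℕ)).map gp).prod *ᵥ a α)
    (hB : ∀ α : Fin d, B α = b α ᵥ* ((((List.finRange d).take (α : ℕ)).map km).reverse).prod) :
    (∀ α : Fin d,
      (1 : Matrix (Fin n) (Fin n) ℂ)
          + ∑ μ : Fin d, (if (μ : ℕ) ≤ (α : ℕ) then Matrix.vecMulVec (A μ) (B μ) else 0)
        = (((List.finRange d).take ((α : ℕ) + 1)).map gp).prod *
            ((((List.finRange d).take ((α : ℕ) + 1)).map km).reverse).prod) ∧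
    (1 : Matrix (Fin n) (Fin n) ℂ)
        + (Matrix.of fun i α => A α i) * (Matrix.of fun α i => B α i)
      = ((List.finRange d).map gp).prod * (((List.finRange d).map km).reverse).prod := by
  
  have hkey : ∀ α : Fin d, gp α * km α = 1 + Matrix.vecMulVec (a α) (b α) := fun α =>
    key (a α) (b α) (s α) (hs0 α) (hsq α) (hlast α) (gp α) (km α) (hgp α) (hkm α)
  have main : ∀ m : ℕ, m ≤ d →
      (1 : Matrix (Fin n) (Fin n) ℂ)
          + ∑ μ : Fin d, (if (μ : ℕ) < m then Matrix.vecMulVec (A μ) (B μ) else 0)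
        = (((List.finRange d).take m).map gp).prod *
            ((((List.finRange d).take m).map km).reverse).prod := by
    intro m
    induction m with
    | zero => intro _; simp
    | succ m ih =>
      intro hm1
      have hm : m < d := hm1
      set P := (((List.finRange d).take m).map gp).prod with hP
      set Q := ((((List.finRange d).take m).map km).reverse).prod with hQ
      have hAm : Matrix.vecMulVec (A ⟨m, hm⟩) (B ⟨m, hm⟩)
          = P * (Matrix.vecMulVec (a ⟨m, hm⟩) (b ⟨m, hm⟩) * Q) := by
        rw [hA ⟨m, hm⟩, hB ⟨m, hm⟩, vecMulVec_mul', mul_vecMulVec']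
      rw [sum_lt_succ m hm, ← add_assoc, ih (le_of_lt hm), take_finRange_succ hm]
      simp only [List.map_append, List.prod_append, List.reverse_append, List.map_cons,
        List.map_nil, List.prod_cons, List.prod_nil, List.reverse_cons, List.reverse_nil,
        List.nil_append, mul_one, ← hP, ← hQ]
      calc P * Q + Matrix.vecMulVec (A ⟨m, hm⟩) (B ⟨m, hm⟩)
          = P * ((1 + Matrix.vecMulVec (a ⟨m, hm⟩) (b ⟨m, hm⟩)) * Q) := by
            rw [hAm]; noncomm_ring
        _ = P * ((gp ⟨m, hm⟩ * km ⟨m, hm⟩) * Q) := by rw [hkey ⟨m, hm⟩]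
        _ = P * gp ⟨m, hm⟩ * (km ⟨m, hm⟩ * Q) := by noncomm_ring
  constructor
  · intro α
    have h := main ((α : ℕ) + 1) α.isLt
    simpa only [Nat.lt_succ_iff] using h
  · have h := main d le_rfl
    have ht : (List.finRange d).take d = List.finRange d := by
      exact List.take_of_length_le (by simp)
    rw [ht] at h
    have h2 : (Matrix.of fun i α => A α i) * (Matrix.of fun α i => B α i)
        = ∑ μ : Fin d, Matrix.vecMulVec (A μ) (B μ) := by
      ext i j
      simp [Matrix.mul_apply, Matrix.sum_apply, Matrix.vecMulVec_apply]
    rw [h2, ← h]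
    congr 1
    exact Finset.sum_congr rfl fun μ _ => (if_pos μ.isLt).symm
end
end

section
/- Let n ≥ 2, d ≥ 2. There exist open neighborhoods U of the origin in (ℂⁿ × ℂⁿ)^d and V of the origin in S(n,d) := Mat_{n×d}(ℂ) × Mat_{d×n}(ℂ) such that the map m (defined below with principal square roots) restricts to a holomorphic bijection from U onto V whose inverse is also holomorphic. -/
open Matrix BigOperators

noncomputable section

attribute [local instance] Matrix.normedAddCommGroup Matrix.normedSpace

/-- The space `S(n,d) = Mat_{n×d}(ℂ) × Mat_{d×n}(ℂ)`. -/
abbrev Snd (n d : ℕ) : Type := Matrix (Fin n) (Fin d) ℂ × Matrix (Fin d) (Fin n) ℂ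

/-- coordinate direction for `A_{iα}`. -/
def eA (n d : ℕ) (i : Fin n) (α : Fin d) : Snd n d := (Matrix.single i α 1, 0)

/-- coordinate direction for `B_{αi}`. -/
def eB (n d : ℕ) (α : Fin d) (i : Fin n) : Snd n d := (0, Matrix.single α i 1)

/-- `{A_i^α, A_k^β}_κ` -/
def pAA (n d : ℕ) (κ : ℂ) (p : Snd n d) (i k : Fin n) (α β : Fin d) : ℂ :=
  κ / 2 * (csgn (((i : ℕ) : ℤ) - ((k : ℕ) : ℤ)) - csgn (((α : ℕ) : ℤ) - ((β : ℕ) : ℤ))) *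
    p.1 k α * p.1 i β

/-- `{B_i^α, B_k^β}_κ` -/
def pBB (n d : ℕ) (κ : ℂ) (p : Snd n d) (i k : Fin n) (α β : Fin d) : ℂ :=
  -(κ / 2) * (csgn (((i : ℕ) : ℤ) - ((k : ℕ) : ℤ)) - csgn (((α : ℕ) : ℤ) - ((β : ℕ) : ℤ))) *
    p.2 α k * p.2 β i

/-- `{A_i^α, B_k^β}_κ` -/
def pAB (n d : ℕ) (κ : ℂ) (p : Snd n d) (i : Fin n) (α : Fin d) (k : Fin n) (β : Fin d) : ℂ :=
  κ / 2 * cdelta i k * p.1 i α * p.2 β k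
    + κ * cdelta i k * ∑ s : Fin n, (if i < s then p.1 s α * p.2 β s else 0)
    + κ / 2 * cdelta α β * p.1 i α * p.2 β k
    + κ * cdelta α β * ∑ μ : Fin d, (if μ < α then p.1 i μ * p.2 μ k else 0)
    + κ * cdelta α β * cdelta i k

/-- The bivector bracket `{F,H}_κ` on `S(n,d)` determined by the coordinate brackets. -/
def brS (n d : ℕ) (κ : ℂ) (F H : Snd n d → ℂ) (p : Snd n d) : ℂ :=
  ∑ i : Fin n, ∑ α : Fin d, ∑ k : Fin n, ∑ β : Fin d,
    (pAA n d κ p i k α β * fderiv ℂ F p (eA n d i α) * fderiv ℂ H p (eA n d k β)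
      + pAB n d κ p i α k β *
          (fderiv ℂ F p (eA n d i α) * fderiv ℂ H p (eB n d β k)
            - fderiv ℂ H p (eA n d i α) * fderiv ℂ F p (eB n d β k))
      + pBB n d κ p i k α β * fderiv ℂ F p (eB n d α i) * fderiv ℂ H p (eB n d β k))

/-- The `d`-fold product `(ℂⁿ × ℂⁿ)^d`. -/
abbrev PSp (n d : ℕ) : Type := Fin d → (Fin n → ℂ) × (Fin n → ℂ)

/-- coordinate direction for `a_i^α`. -/
def ea (n d : ℕ) (α : Fin d) (i : Fin n) : PSp n d := Pi.single α (Pi.single i 1, 0)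

/-- coordinate direction for `b_i^α`. -/
def eb (n d : ℕ) (α : Fin d) (i : Fin n) : PSp n d := Pi.single α (0, Pi.single i 1)

/-- `{a_i, a_k}_κ` on one copy of `S(n,1)`. -/
def paa1 (n : ℕ) (κ : ℂ) (y : (Fin n → ℂ) × (Fin n → ℂ)) (i k : Fin n) : ℂ :=
  κ / 2 * csgn (((i : ℕ) : ℤ) - ((k : ℕ) : ℤ)) * y.1 k * y.1 i

/-- `{b_i, b_k}_κ` on one copy of `S(n,1)`. -/
def pbb1 (n : ℕ) (κ : ℂ) (y : (Fin n → ℂ) × (Fin n → ℂ)) (i k : Fin n) : ℂ :=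
  -(κ / 2) * csgn (((i : ℕ) : ℤ) - ((k : ℕ) : ℤ)) * y.2 k * y.2 i

/-- `{a_i, b_k}_κ` on one copy of `S(n,1)`. -/
def pab1 (n : ℕ) (κ : ℂ) (y : (Fin n → ℂ) × (Fin n → ℂ)) (i k : Fin n) : ℂ :=
  κ / 2 * cdelta i k * y.1 i * y.2 k
    + κ * cdelta i k * ∑ s : Fin n, (if i < s then y.1 s * y.2 s else 0)
    + κ / 2 * y.1 i * y.2 k
    + κ * cdelta i k

/-- The product Poisson bracket on `(ℂⁿ × ℂⁿ)^d`, the sum over the `d` copies of the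
`S(n,1)`-brackets; coordinates from different copies Poisson-commute. -/
def brProd (n d : ℕ) (κ : ℂ) (F H : PSp n d → ℂ) (x : PSp n d) : ℂ :=
  ∑ α : Fin d, ∑ i : Fin n, ∑ k : Fin n,
    (paa1 n κ (x α) i k * fderiv ℂ F x (ea n d α i) * fderiv ℂ H x (ea n d α k)
      + pab1 n κ (x α) i k *
          (fderiv ℂ F x (ea n d α i) * fderiv ℂ H x (eb n d α k)
            - fderiv ℂ H x (ea n d α i) * fderiv ℂ F x (eb n d α k))
      + pbb1 n κ (x α) i k * fderiv ℂ F x (eb n d α i) * fderiv ℂ H x (eb n d α k))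

/-- `G_j^α = 1 + Σ_{k=j}^n a_k^α b_k^α` (`j` runs through `1,…,n+1`; `G_{n+1}^α = 1`). -/
def Gfun (n d : ℕ) (x : PSp n d) (α : Fin d) (j : Fin (n + 1)) : ℂ :=
  1 + ∑ k : Fin n, (if (j : ℕ) ≤ (k : ℕ) then (x α).1 k * (x α).2 k else 0)

/-- `s_j^α`, the principal square root of `G_j^α`. -/
def sfun (n d : ℕ) (x : PSp n d) (α : Fin d) (j : Fin (n + 1)) : ℂ :=
  Gfun n d x α j ^ ((1 : ℂ) / 2)

/-- The upper-triangular matrix `g₊,α`. -/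
def gP (n d : ℕ) (x : PSp n d) (α : Fin d) : Matrix (Fin n) (Fin n) ℂ :=
  Matrix.of fun j k =>
    if j = k then sfun n d x α j.castSucc / sfun n d x α j.succ
    else if j < k then (x α).1 j * (x α).2 k / (sfun n d x α k.castSucc * sfun n d x α k.succ)
    else 0

/-- The lower-triangular matrix `k_α` (i.e. `g₋,α⁻¹`). -/
def kM (n d : ℕ) (x : PSp n d) (α : Fin d) : Matrix (Fin n) (Fin n) ℂ :=
  Matrix.of fun j k =>
    if j = k then sfun n d x α j.castSucc / sfun n d x α j.succ
    else if k < j then (x α).1 j * (x α).2 k / (sfun n d x α j.castSucc * sfun n d x α j.succ)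
    else 0

/-- `h₊^m := g₊,1 ⋯ g₊,m` (empty product is `1ₙ`). -/
def hPl (n d : ℕ) (x : PSp n d) (m : ℕ) : Matrix (Fin n) (Fin n) ℂ :=
  (((List.finRange d).take m).map (gP n d x)).prod

/-- `h₋^m := k_m ⋯ k_1` (empty product is `1ₙ`). -/
def hMl (n d : ℕ) (x : PSp n d) (m : ℕ) : Matrix (Fin n) (Fin n) ℂ :=
  ((((List.finRange d).take m).map (kM n d x)).reverse).prod

/-- `h₊^{α+1;γ} := g₊,α+1 ⋯ g₊,γ` (math indices `α+1,…,γ`; empty product is `1ₙ`). -/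
def segP (n d : ℕ) (x : PSp n d) (α γ : ℕ) : Matrix (Fin n) (Fin n) ℂ :=
  ((((List.finRange d).take γ).drop α).map (gP n d x)).prod

/-- `h₋^{α+1;γ} := k_γ ⋯ k_{α+1}` (empty product is `1ₙ`). -/
def segM (n d : ℕ) (x : PSp n d) (α γ : ℕ) : Matrix (Fin n) (Fin n) ℂ :=
  (((((List.finRange d).take γ).drop α).map (kM n d x)).reverse).prod

/-- The decoupling map `m : (a,b) ↦ (A,B)`, with columns `A^α = g₊,1 ⋯ g₊,α−1 a^α`
and rows `B^α = b^α k_{α−1} ⋯ k_1`. -/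
def mmap (n d : ℕ) (x : PSp n d) : Snd n d :=
  (Matrix.of fun i α => (hPl n d x (α : ℕ) *ᵥ (x α).1) i,
   Matrix.of fun α i => ((x α).2 ᵥ* hMl n d x (α : ℕ)) i)

namespace Statement3Aux

open Complex

variable (n d : ℕ)

/-- coordinate CLM for `a_i^α`. -/
def Ca (α : Fin d) (i : Fin n) : PSp n d →L[ℂ] ℂ :=
  (ContinuousLinearMap.proj i).comp
    ((ContinuousLinearMap.fst ℂ (Fin n → ℂ) (Fin n → ℂ)).comp
      (ContinuousLinearMap.proj (R := ℂ) (φ := fun _ : Fin d => (Fin n → ℂ) × (Fin n → ℂ)) α))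

/-- coordinate CLM for `b_i^α`. -/
def Cb (α : Fin d) (i : Fin n) : PSp n d →L[ℂ] ℂ :=
  (ContinuousLinearMap.proj i).comp
    ((ContinuousLinearMap.snd ℂ (Fin n → ℂ) (Fin n → ℂ)).comp
      (ContinuousLinearMap.proj (R := ℂ) (φ := fun _ : Fin d => (Fin n → ℂ) × (Fin n → ℂ)) α))

@[simp] lemma Ca_apply (α : Fin d) (i : Fin n) (x : PSp n d) : Ca n d α i x = (x α).1 i := rfl
@[simp] lemma Cb_apply (α : Fin d) (i : Fin n) (x : PSp n d) : Cb n d α i x = (x α).2 i := rfl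

lemma analyticAt_a (α : Fin d) (i : Fin n) (x : PSp n d) :
    AnalyticAt ℂ (fun x : PSp n d => (x α).1 i) x := (Ca n d α i).analyticAt x

lemma analyticAt_b (α : Fin d) (i : Fin n) (x : PSp n d) :
    AnalyticAt ℂ (fun x : PSp n d => (x α).2 i) x := (Cb n d α i).analyticAt x

lemma analyticAt_G (α : Fin d) (j : Fin (n + 1)) (x : PSp n d) :
    AnalyticAt ℂ (fun x => Gfun n d x α j) x := by
  unfold Gfun
  apply analyticAt_const.add
  apply Finset.analyticAt_fun_sum
  intro k _
  by_cases h : (j : ℕ) ≤ (k : ℕ)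
  · simp only [if_pos h]
    exact (analyticAt_a n d α k x).mul (analyticAt_b n d α k x)
  · simp only [if_neg h]
    exact analyticAt_const

/-- the neighborhood of `0` on which everything is analytic -/
def U0 : Set (PSp n d) :=
  {x | ∀ (α : Fin d) (j : Fin (n + 1)), Gfun n d x α j ∈ Complex.slitPlane}

lemma isOpen_U0 : IsOpen (U0 n d) := by
  have h : U0 n d = ⋂ (α : Fin d), ⋂ (j : Fin (n + 1)),
      (fun x => Gfun n d x α j) ⁻¹' Complex.slitPlane := by
    ext x; simp [U0, Set.mem_iInter]
  rw [h]
  exact isOpen_iInter_of_finite fun α => isOpen_iInter_of_finite fun j =>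
    Complex.isOpen_slitPlane.preimage
      (continuous_iff_continuousAt.2 fun x => (analyticAt_G n d α j x).continuousAt)

lemma Gfun_zero (α : Fin d) (j : Fin (n + 1)) : Gfun n d (0 : PSp n d) α j = 1 := by
  simp [Gfun]

lemma zero_mem_U0 : (0 : PSp n d) ∈ U0 n d := by
  intro α j
  rw [Gfun_zero]
  exact Complex.one_mem_slitPlane

lemma analyticAt_s {x : PSp n d} (hx : x ∈ U0 n d) (α : Fin d) (j : Fin (n + 1)) :
    AnalyticAt ℂ (fun x => sfun n d x α j) x :=
  (analyticAt_G n d α j x).cpow analyticAt_const (hx α j)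

lemma s_ne_zero {x : PSp n d} (hx : x ∈ U0 n d) (α : Fin d) (j : Fin (n + 1)) :
    sfun n d x α j ≠ 0 := by
  have h0 := Complex.slitPlane_ne_zero (hx α j)
  simp only [sfun]
  rw [Complex.cpow_def_of_ne_zero h0]
  exact Complex.exp_ne_zero _

lemma sfun_zero (α : Fin d) (j : Fin (n + 1)) : sfun n d (0 : PSp n d) α j = 1 := by
  simp [sfun, Gfun_zero]

lemma analyticAt_gP {x : PSp n d} (hx : x ∈ U0 n d) (α : Fin d) (j k : Fin n) :
    AnalyticAt ℂ (fun x => gP n d x α j k) x := by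
  unfold gP
  simp only [Matrix.of_apply]
  by_cases h : j = k
  · simp only [if_pos h]
    exact (analyticAt_s n d hx α _).div (analyticAt_s n d hx α _) (s_ne_zero n d hx α _)
  · simp only [if_neg h]
    by_cases h2 : j < k
    · simp only [if_pos h2]
      exact ((analyticAt_a n d α j x).mul (analyticAt_b n d α k x)).div
        ((analyticAt_s n d hx α _).mul (analyticAt_s n d hx α _))
        (mul_ne_zero (s_ne_zero n d hx α _) (s_ne_zero n d hx α _))
    · simp only [if_neg h2]
      exact analyticAt_const

lemma analyticAt_kM {x : PSp n d} (hx : x ∈ U0 n d) (α : Fin d) (j k : Fin n) :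
    AnalyticAt ℂ (fun x => kM n d x α j k) x := by
  unfold kM
  simp only [Matrix.of_apply]
  by_cases h : j = k
  · simp only [if_pos h]
    exact (analyticAt_s n d hx α _).div (analyticAt_s n d hx α _) (s_ne_zero n d hx α _)
  · simp only [if_neg h]
    by_cases h2 : k < j
    · simp only [if_pos h2]
      exact ((analyticAt_a n d α j x).mul (analyticAt_b n d α k x)).div
        ((analyticAt_s n d hx α _).mul (analyticAt_s n d hx α _))
        (mul_ne_zero (s_ne_zero n d hx α _) (s_ne_zero n d hx α _))
    · simp only [if_neg h2]
      exact analyticAt_const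

lemma gP_zero (α : Fin d) : gP n d (0 : PSp n d) α = 1 := by
  ext j k
  simp only [gP, Matrix.of_apply, sfun_zero, Matrix.one_apply]
  by_cases h : j = k
  · simp [h]
  · simp [h]

lemma kM_zero (α : Fin d) : kM n d (0 : PSp n d) α = 1 := by
  ext j k
  simp only [kM, Matrix.of_apply, sfun_zero, Matrix.one_apply]
  by_cases h : j = k
  · simp [h]
  · simp [h]

lemma hPl_succ (x : PSp n d) (m : ℕ) (h : m < d) :
    hPl n d x (m + 1) = hPl n d x m * gP n d x ⟨m, h⟩ := by
  unfold hPl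
  rw [List.take_succ]
  have : (List.finRange d)[m]? = some ⟨m, h⟩ := by
    rw [List.getElem?_eq_getElem (by simpa using h)]
    simp
  rw [this]
  simp

lemma hPl_stable (x : PSp n d) (m : ℕ) (h : ¬ m < d) :
    hPl n d x (m + 1) = hPl n d x m := by
  unfold hPl
  rw [List.take_succ]
  have : (List.finRange d)[m]? = none := by
    rw [List.getElem?_eq_none]
    simpa using Nat.le_of_not_lt h
  rw [this]
  simp

lemma hMl_succ (x : PSp n d) (m : ℕ) (h : m < d) :
    hMl n d x (m + 1) = kM n d x ⟨m, h⟩ * hMl n d x m := by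
  unfold hMl
  rw [List.take_succ]
  have : (List.finRange d)[m]? = some ⟨m, h⟩ := by
    rw [List.getElem?_eq_getElem (by simpa using h)]
    simp
  rw [this]
  simp

lemma hMl_stable (x : PSp n d) (m : ℕ) (h : ¬ m < d) :
    hMl n d x (m + 1) = hMl n d x m := by
  unfold hMl
  rw [List.take_succ]
  have : (List.finRange d)[m]? = none := by
    rw [List.getElem?_eq_none]
    simpa using Nat.le_of_not_lt h
  rw [this]
  simp

lemma hPl_zero_eq_one (m : ℕ) : hPl n d (0 : PSp n d) m = 1 := by
  induction m with
  | zero => rfl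
  | succ m ih =>
    by_cases h : m < d
    · rw [hPl_succ n d _ m h, ih, gP_zero, one_mul]
    · rw [hPl_stable n d _ m h, ih]

lemma hMl_zero_eq_one (m : ℕ) : hMl n d (0 : PSp n d) m = 1 := by
  induction m with
  | zero => rfl
  | succ m ih =>
    by_cases h : m < d
    · rw [hMl_succ n d _ m h, ih, kM_zero, one_mul]
    · rw [hMl_stable n d _ m h, ih]

lemma analyticAt_hPl {x : PSp n d} (hx : x ∈ U0 n d) (m : ℕ) (i j : Fin n) :
    AnalyticAt ℂ (fun x => hPl n d x m i j) x := by
  induction m generalizing i j with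
  | zero => exact analyticAt_const
  | succ m ih =>
    by_cases h : m < d
    · have he : (fun x => hPl n d x (m + 1) i j)
          = fun x => ∑ k, hPl n d x m i k * gP n d x ⟨m, h⟩ k j := by
        funext y; rw [hPl_succ n d y m h, Matrix.mul_apply]
      rw [he]
      exact Finset.analyticAt_fun_sum _ fun k _ => (ih i k).mul (analyticAt_gP n d hx _ _ _)
    · have he : (fun x => hPl n d x (m + 1) i j) = fun x => hPl n d x m i j := by
        funext y; rw [hPl_stable n d y m h]
      rw [he]; exact ih i j

lemma analyticAt_hMl {x : PSp n d} (hx : x ∈ U0 n d) (m : ℕ) (i j : Fin n) :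
    AnalyticAt ℂ (fun x => hMl n d x m i j) x := by
  induction m generalizing i j with
  | zero => exact analyticAt_const
  | succ m ih =>
    by_cases h : m < d
    · have he : (fun x => hMl n d x (m + 1) i j)
          = fun x => ∑ k, kM n d x ⟨m, h⟩ i k * hMl n d x m k j := by
        funext y; rw [hMl_succ n d y m h, Matrix.mul_apply]
      rw [he]
      exact Finset.analyticAt_fun_sum _ fun k _ => (analyticAt_kM n d hx _ _ _).mul (ih k j)
    · have he : (fun x => hMl n d x (m + 1) i j) = fun x => hMl n d x m i j := by
        funext y; rw [hMl_stable n d y m h]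
      rw [he]; exact ih i j

lemma mmap_fst_apply (x : PSp n d) (i : Fin n) (α : Fin d) :
    (mmap n d x).1 i α = ∑ j, hPl n d x (α : ℕ) i j * (x α).1 j := by
  simp [mmap, Matrix.mulVec, dotProduct]

lemma mmap_snd_apply (x : PSp n d) (α : Fin d) (i : Fin n) :
    (mmap n d x).2 α i = ∑ j, (x α).2 j * hMl n d x (α : ℕ) j i := by
  simp [mmap, Matrix.vecMul, dotProduct]

lemma mmap_zero : mmap n d (0 : PSp n d) = 0 := by
  refine Prod.ext ?_ ?_
  · funext i α
    rw [show (mmap n d (0 : PSp n d)).1 i α = _ from mmap_fst_apply n d 0 i α]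
    simp
  · funext α i
    rw [show (mmap n d (0 : PSp n d)).2 α i = _ from mmap_snd_apply n d 0 α i]
    simp

lemma contDiffAt_mmap {x : PSp n d} (hx : x ∈ U0 n d) :
    ContDiffAt ℂ 1 (mmap n d) x := by
  apply ContDiffAt.prodMk
  · exact contDiffAt_pi.2 fun i => contDiffAt_pi.2 fun α => by
      have he : (fun x : PSp n d => (mmap n d x).1 i α)
          = fun x => ∑ j, hPl n d x (α : ℕ) i j * (x α).1 j := by
        funext y; exact mmap_fst_apply n d y i α
      have hc : ContDiffAt ℂ 1 (fun x : PSp n d => ∑ j, hPl n d x (α : ℕ) i j * (x α).1 j) x :=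
        (Finset.analyticAt_fun_sum _ fun j _ =>
        (analyticAt_hPl n d hx (α : ℕ) i j).mul (analyticAt_a n d α j x)).contDiffAt
      rw [← he] at hc
      exact hc
  · exact contDiffAt_pi.2 fun α => contDiffAt_pi.2 fun i => by
      have he : (fun x : PSp n d => (mmap n d x).2 α i)
          = fun x => ∑ j, (x α).2 j * hMl n d x (α : ℕ) j i := by
        funext y; exact mmap_snd_apply n d y α i
      have hc : ContDiffAt ℂ 1 (fun x : PSp n d => ∑ j, (x α).2 j * hMl n d x (α : ℕ) j i) x :=
        (Finset.analyticAt_fun_sum _ fun j _ =>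
        (analyticAt_b n d α j x).mul (analyticAt_hMl n d hx (α : ℕ) j i)).contDiffAt
      rw [← he] at hc
      exact hc

/-- the obvious linear identification, as forward CLM -/
def L0 : PSp n d →L[ℂ] Snd n d :=
  (ContinuousLinearMap.pi fun i : Fin n => ContinuousLinearMap.pi fun α : Fin d =>
    Ca n d α i).prod
  (ContinuousLinearMap.pi fun α : Fin d => ContinuousLinearMap.pi fun i : Fin n =>
    Cb n d α i)

/-- the inverse CLM -/
def M0 : Snd n d →L[ℂ] PSp n d :=
  ContinuousLinearMap.pi fun α : Fin d =>
    (ContinuousLinearMap.pi fun i : Fin n =>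
        (ContinuousLinearMap.proj (R := ℂ) (φ := fun _ : Fin d => ℂ) α).comp
          ((ContinuousLinearMap.proj (R := ℂ) (φ := fun _ : Fin n => Fin d → ℂ) i).comp
            (ContinuousLinearMap.fst ℂ (Matrix (Fin n) (Fin d) ℂ) (Matrix (Fin d) (Fin n) ℂ)))).prod
    (ContinuousLinearMap.pi fun i : Fin n =>
        (ContinuousLinearMap.proj (R := ℂ) (φ := fun _ : Fin n => ℂ) i).comp
          ((ContinuousLinearMap.proj (R := ℂ) (φ := fun _ : Fin d => Fin n → ℂ) α).comp
            (ContinuousLinearMap.snd ℂ (Matrix (Fin n) (Fin d) ℂ) (Matrix (Fin d) (Fin n) ℂ))))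

/-- the obvious linear identification as a continuous linear equivalence -/
def Eequiv : PSp n d ≃L[ℂ] Snd n d :=
  ContinuousLinearEquiv.equivOfInverse (L0 n d) (M0 n d) (fun _ => rfl) (fun _ => rfl)

lemma Eequiv_coe : (Eequiv n d : PSp n d →L[ℂ] Snd n d) = L0 n d := by
  ext x <;> rfl

lemma hasFDerivAt_mmap_zero : HasFDerivAt (mmap n d) (L0 n d) (0 : PSp n d) := by
  have h0 : (0 : PSp n d) ∈ U0 n d := zero_mem_U0 n d
  have hfst : ∀ (i : Fin n) (α : Fin d),
      HasFDerivAt (fun x : PSp n d => (mmap n d x).1 i α) (Ca n d α i) 0 := by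
    intro i α
    have he : (fun x : PSp n d => (mmap n d x).1 i α)
        = fun x => ∑ j, hPl n d x (α : ℕ) i j * (x α).1 j := by
      funext y; exact mmap_fst_apply n d y i α
    rw [he]
    have hsum : HasFDerivAt (fun x : PSp n d => ∑ j, hPl n d x (α : ℕ) i j * (x α).1 j)
        (∑ j, (hPl n d (0 : PSp n d) (α : ℕ) i j •
            (Ca n d α j : PSp n d →L[ℂ] ℂ)
          + ((0 : PSp n d) α).1 j •
            fderiv ℂ (fun x : PSp n d => hPl n d x (α : ℕ) i j) 0)) 0 := by
      apply HasFDerivAt.fun_sum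
      intro j _
      exact ((analyticAt_hPl n d h0 (α : ℕ) i j).differentiableAt.hasFDerivAt).mul
        ((Ca n d α j).hasFDerivAt)
    convert hsum using 1
    rw [hPl_zero_eq_one]
    have hz : ∀ c : PSp n d →L[ℂ] ℂ, (0 : ℂ) • c = 0 := fun c => zero_smul ℂ c
    simp [Matrix.one_apply, ite_smul, one_smul, hz, add_zero,
      Finset.sum_ite_eq, Finset.sum_ite_eq']
  have hsnd : ∀ (α : Fin d) (i : Fin n),
      HasFDerivAt (fun x : PSp n d => (mmap n d x).2 α i) (Cb n d α i) 0 := by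
    intro α i
    have he : (fun x : PSp n d => (mmap n d x).2 α i)
        = fun x => ∑ j, (x α).2 j * hMl n d x (α : ℕ) j i := by
      funext y; exact mmap_snd_apply n d y α i
    rw [he]
    have hsum : HasFDerivAt (fun x : PSp n d => ∑ j, (x α).2 j * hMl n d x (α : ℕ) j i)
        (∑ j, (((0 : PSp n d) α).2 j •
            fderiv ℂ (fun x : PSp n d => hMl n d x (α : ℕ) j i) 0
          + hMl n d (0 : PSp n d) (α : ℕ) j i •
            (Cb n d α j : PSp n d →L[ℂ] ℂ))) 0 := by
      apply HasFDerivAt.fun_sum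
      intro j _
      exact ((Cb n d α j).hasFDerivAt).mul
        ((analyticAt_hMl n d h0 (α : ℕ) j i).differentiableAt.hasFDerivAt)
    convert hsum using 1
    rw [hMl_zero_eq_one]
    have hz : ∀ c : PSp n d →L[ℂ] ℂ, (0 : ℂ) • c = 0 := fun c => zero_smul ℂ c
    simp [Matrix.one_apply, ite_smul, one_smul, hz, add_zero,
      Finset.sum_ite_eq, Finset.sum_ite_eq']
  have h1 : HasFDerivAt (fun x : PSp n d => (mmap n d x).1)
      (ContinuousLinearMap.pi fun i : Fin n => ContinuousLinearMap.pi fun α : Fin d =>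
        Ca n d α i) 0 :=
    hasFDerivAt_pi.2 fun i => hasFDerivAt_pi.2 fun α => hfst i α
  have h2 : HasFDerivAt (fun x : PSp n d => (mmap n d x).2)
      (ContinuousLinearMap.pi fun α : Fin d => ContinuousLinearMap.pi fun i : Fin n =>
        Cb n d α i) 0 :=
    hasFDerivAt_pi.2 fun α => hasFDerivAt_pi.2 fun i => hsnd α i
  exact h1.prodMk h2

lemma hasStrictFDerivAt_mmap_zero :
    HasStrictFDerivAt (mmap n d) (Eequiv n d : PSp n d →L[ℂ] Snd n d) (0 : PSp n d) := by
  have h := (contDiffAt_mmap n d (zero_mem_U0 n d)).hasStrictFDerivAt one_ne_zero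
  rw [Eequiv_coe n d]
  exact (contDiffAt_mmap n d (zero_mem_U0 n d)).hasStrictFDerivAt' (hasFDerivAt_mmap_zero n d) one_ne_zero

end Statement3Aux

/-- `m` restricts to a holomorphic bijection between open neighborhoods of the
origins, with holomorphic inverse. -/
theorem statement3 (n d : ℕ) (hn : 2 ≤ n) (hd : 2 ≤ d) :
    ∃ (U : Set (PSp n d)) (V : Set (Snd n d)) (g : Snd n d → PSp n d),
      IsOpen U ∧ IsOpen V ∧ (0 : PSp n d) ∈ U ∧ (0 : Snd n d) ∈ V ∧
      DifferentiableOn ℂ (mmap n d) U ∧ Set.BijOn (mmap n d) U V ∧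
      DifferentiableOn ℂ g V ∧
      (∀ x ∈ U, g (mmap n d x) = x) ∧ (∀ y ∈ V, mmap n d (g y) = y) := by
  classical
  open Statement3Aux in
  -- smoothness on the open set U0
  have hcd : ContDiffOn ℂ 1 (mmap n d) (U0 n d) :=
    fun x hx => (contDiffAt_mmap n d hx).contDiffWithinAt
  have hDcont : ContinuousOn (fderiv ℂ (mmap n d)) (U0 n d) :=
    hcd.continuousOn_fderiv_of_isOpen (isOpen_U0 n d) le_rfl
  set R : Set (PSp n d →L[ℂ] Snd n d) :=
    Set.range ((↑) : (PSp n d ≃L[ℂ] Snd n d) → (PSp n d →L[ℂ] Snd n d)) with hR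
  have hRopen : IsOpen R := ContinuousLinearEquiv.isOpen
  set W : Set (PSp n d) := U0 n d ∩ fderiv ℂ (mmap n d) ⁻¹' R with hW
  have hWopen : IsOpen W :=
    hDcont.isOpen_inter_preimage (isOpen_U0 n d) hRopen
  have h0W : (0 : PSp n d) ∈ W := by
    refine ⟨zero_mem_U0 n d, ?_⟩
    show fderiv ℂ (mmap n d) 0 ∈ R
    rw [(hasFDerivAt_mmap_zero n d).fderiv, ← Eequiv_coe n d]
    exact ⟨Eequiv n d, rfl⟩
  -- the local homeomorphism from the inverse function theorem
  have hstrict := hasStrictFDerivAt_mmap_zero n d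
  set φ := hstrict.toOpenPartialHomeomorph (mmap n d) with hφ
  have hφcoe : (φ : PSp n d → Snd n d) = mmap n d := hstrict.toOpenPartialHomeomorph_coe
  have h0src : (0 : PSp n d) ∈ φ.source := hstrict.mem_toOpenPartialHomeomorph_source
  set U : Set (PSp n d) := φ.source ∩ W with hU
  have hUopen : IsOpen U := φ.open_source.inter hWopen
  have hUsub : U ⊆ φ.source := Set.inter_subset_left
  have h0U : (0 : PSp n d) ∈ U := ⟨h0src, h0W⟩
  set V : Set (Snd n d) := mmap n d '' U with hV
  have hVφ : V = φ '' U := by rw [hφcoe]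
  have hVopen : IsOpen V := by
    rw [hVφ]
    exact φ.isOpen_image_of_subset_source hUopen hUsub
  have h0V : (0 : Snd n d) ∈ V := ⟨0, h0U, mmap_zero n d⟩
  have hVtarget : V ⊆ φ.target := by
    rw [hVφ]
    rintro y ⟨x, hx, rfl⟩
    exact φ.map_source (hUsub hx)
  refine ⟨U, V, φ.symm, hUopen, hVopen, h0U, h0V, ?_, ?_, ?_, ?_, ?_⟩
  · -- DifferentiableOn mmap U
    exact fun x hx =>
      ((contDiffAt_mmap n d hx.2.1).differentiableAt one_ne_zero).differentiableWithinAt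
  · -- BijOn
    refine ⟨fun x hx => Set.mem_image_of_mem _ hx, ?_, fun y hy => hy⟩
    have := φ.injOn.mono hUsub
    rwa [hφcoe] at this
  · -- DifferentiableOn φ.symm V
    rintro y hyV
    obtain ⟨x, hxU, rfl⟩ := hyV
    have hyT : mmap n d x ∈ φ.target := hVtarget ⟨x, hxU, rfl⟩
    have hgx : φ.symm (mmap n d x) = x := by
      have := φ.left_inv (hUsub hxU)
      rwa [hφcoe] at this
    obtain ⟨e, he⟩ := hxU.2.2
    have hdf : HasFDerivAt (mmap n d) (e : PSp n d →L[ℂ] Snd n d) x := by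
      rw [he]
      exact ((contDiffAt_mmap n d hxU.2.1).differentiableAt one_ne_zero).hasFDerivAt
    have hfg : ∀ᶠ y' in nhds (mmap n d x), mmap n d (φ.symm y') = y' := by
      have h := φ.eventually_right_inverse hyT
      rw [hφcoe] at h
      exact h
    have hcg : ContinuousAt φ.symm (mmap n d x) := φ.continuousAt_symm hyT
    have hdg : HasFDerivAt φ.symm (e.symm : Snd n d →L[ℂ] PSp n d) (mmap n d x) := by
      refine HasFDerivAt.of_local_left_inverse hcg ?_ hfg
      rwa [hgx]
    exact hdg.differentiableAt.differentiableWithinAt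
  · -- left inverse on U
    intro x hx
    have := φ.left_inv (hUsub hx)
    rwa [hφcoe] at this
  · -- right inverse on V
    intro y hy
    have := φ.right_inv (hVtarget hy)
    rwa [hφcoe] at this
end
end

section
/- Let n, d ≥ 1, κ ∈ ℂ∖{0}, let η^d := Σ_{i=1}^d E_{i,d+1−i} be the d×d antidiagonal permutation matrix, and let ξ_A, ξ_B ∈ ℂ with ξ_A ξ_B = −1/κ. Then the map ξ: S(n,d) → S(n,d), ξ(A,B) := (ξ_A A η^d, ξ_B η^d B), is a bijection, and for all differentiable functions F, H on S(n,d): {F∘ξ, H∘ξ}_κ = {F, H}^+_{−κ} ∘ ξ. That is, ξ is a Poisson diffeomorphism from (S(n,d), {·,·}_κ) to (S(n,d), {·,·}^+_{−κ}). -/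
open Matrix BigOperators

noncomputable section

attribute [local instance] Matrix.normedAddCommGroup Matrix.normedSpace

/-- `{𝒜_i^α, 𝒜_k^β}^+_κ` -/
def pAAplus (n d : ℕ) (κ : ℂ) (p : Snd n d) (i k : Fin n) (α β : Fin d) : ℂ :=
  -(κ / 2) * (csgn (((i : ℕ) : ℤ) - ((k : ℕ) : ℤ)) + csgn (((α : ℕ) : ℤ) - ((β : ℕ) : ℤ))) *
    p.1 k α * p.1 i β

/-- `{ℬ_i^α, ℬ_k^β}^+_κ` -/
def pBBplus (n d : ℕ) (κ : ℂ) (p : Snd n d) (i k : Fin n) (α β : Fin d) : ℂ :=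
  κ / 2 * (csgn (((i : ℕ) : ℤ) - ((k : ℕ) : ℤ)) + csgn (((α : ℕ) : ℤ) - ((β : ℕ) : ℤ))) *
    p.2 α k * p.2 β i

/-- `{𝒜_i^α, ℬ_k^β}^+_κ` -/
def pABplus (n d : ℕ) (κ : ℂ) (p : Snd n d) (i : Fin n) (α : Fin d) (k : Fin n) (β : Fin d) : ℂ :=
  -(κ / 2) * cdelta i k * p.1 i α * p.2 β k
    - κ * cdelta i k * ∑ s : Fin n, (if i < s then p.1 s α * p.2 β s else 0)
    - κ / 2 * cdelta α β * p.1 i α * p.2 β k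
    - κ * cdelta α β * ∑ μ : Fin d, (if α < μ then p.1 i μ * p.2 μ k else 0)
    - cdelta i k * cdelta α β

/-- The Arutyunov–Olivucci bivector bracket `{F,H}^+_κ` on `S(n,d)`. -/
def brP (n d : ℕ) (κ : ℂ) (F H : Snd n d → ℂ) (p : Snd n d) : ℂ :=
  ∑ i : Fin n, ∑ α : Fin d, ∑ k : Fin n, ∑ β : Fin d,
    (pAAplus n d κ p i k α β * fderiv ℂ F p (eA n d i α) * fderiv ℂ H p (eA n d k β)
      + pABplus n d κ p i α k β *
          (fderiv ℂ F p (eA n d i α) * fderiv ℂ H p (eB n d β k)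
            - fderiv ℂ H p (eA n d i α) * fderiv ℂ F p (eB n d β k))
      + pBBplus n d κ p i k α β * fderiv ℂ F p (eB n d α i) * fderiv ℂ H p (eB n d β k))

/-- The `ℓ×ℓ` antidiagonal permutation matrix `η^ℓ = Σ_{i=1}^ℓ E_{i,ℓ+1−i}`. -/
def etaM (ℓ : ℕ) : Matrix (Fin ℓ) (Fin ℓ) ℂ :=
  Matrix.of fun i j => if (i : ℕ) + (j : ℕ) + 1 = ℓ then 1 else 0

/-! ### Auxiliary lemmas -/

lemma etaM_apply (d : ℕ) (x y : Fin d) : etaM d x y = if y = x.rev then 1 else 0 := by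
  have hx := x.isLt; have hy := y.isLt
  simp only [etaM, Matrix.of_apply]
  congr 1
  simp only [Fin.ext_iff, Fin.val_rev, eq_iff_iff]
  omega

lemma mul_etaM {n d : ℕ} (M : Matrix (Fin n) (Fin d) ℂ) (i : Fin n) (β : Fin d) :
    (M * etaM d) i β = M i β.rev := by
  have : ∀ j : Fin d, etaM d j β = if j = β.rev then 1 else 0 := by
    intro j
    rw [etaM_apply]
    congr 1
    simp only [eq_iff_iff]
    constructor
    · rintro rfl; simp [Fin.rev_rev]
    · rintro rfl; simp [Fin.rev_rev]
  simp [Matrix.mul_apply, this, Finset.sum_ite_eq']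

lemma etaM_mul {n d : ℕ} (M : Matrix (Fin d) (Fin n) ℂ) (α : Fin d) (j : Fin n) :
    (etaM d * M) α j = M α.rev j := by
  simp [Matrix.mul_apply, etaM_apply, Finset.sum_ite_eq']

lemma etaM_sq (d : ℕ) : etaM d * etaM d = 1 := by
  ext x y
  rw [etaM_mul, etaM_apply, Matrix.one_apply, Fin.rev_rev]
  simp [eq_comm]

lemma csgn_neg (m : ℤ) : csgn (-m) = -csgn m := by
  simp [csgn, Int.sign_neg]

lemma rev_sub_rev {d : ℕ} (α β : Fin d) :
    ((α.rev : ℕ) : ℤ) - ((β.rev : ℕ) : ℤ) = -((((α : ℕ) : ℤ)) - (((β : ℕ) : ℤ))) := by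
  have hα := α.isLt; have hβ := β.isLt
  simp only [Fin.val_rev]
  omega

lemma csgn_rev {d : ℕ} (α β : Fin d) :
    csgn (((α.rev : ℕ) : ℤ) - ((β.rev : ℕ) : ℤ)) =
      -csgn ((((α : ℕ) : ℤ)) - (((β : ℕ) : ℤ))) := by
  rw [rev_sub_rev, csgn_neg]

lemma cdelta_rev {d : ℕ} (α β : Fin d) : cdelta α.rev β.rev = cdelta α β := by
  simp [cdelta, Fin.rev_inj]

section xi

variable (n d : ℕ) (ξA ξB : ℂ)

/-- `ξ` as a linear map. -/
def xiLM : Snd n d →ₗ[ℂ] Snd n d where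
  toFun p := (ξA • (p.1 * etaM d), ξB • (etaM d * p.2))
  map_add' p q := by
    simp [Matrix.add_mul, Matrix.mul_add, smul_add, Prod.ext_iff]
  map_smul' c p := by
    simp only [Prod.smul_fst, Prod.smul_snd, Matrix.smul_mul, Matrix.mul_smul,
      RingHom.id_apply, Prod.smul_mk]
    rw [smul_comm ξA c, smul_comm ξB c]

/-- `ξ` as a continuous linear map. -/
def xiCLM : Snd n d →L[ℂ] Snd n d := LinearMap.toContinuousLinearMap (xiLM n d ξA ξB)

lemma xiCLM_apply (p : Snd n d) :
    xiCLM n d ξA ξB p = (ξA • (p.1 * etaM d), ξB • (etaM d * p.2)) := rfl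

lemma stdBasis_mul_etaM {n d : ℕ} (i : Fin n) (α : Fin d) :
    (Matrix.single i α (1 : ℂ)) * etaM d = Matrix.single i α.rev 1 := by
  ext x y
  rw [mul_etaM]
  simp only [Matrix.single, Matrix.of_apply]
  congr 1
  simp only [eq_iff_iff, and_congr_right_iff]
  intro _
  constructor
  · rintro rfl; simp [Fin.rev_rev]
  · rintro rfl; simp [Fin.rev_rev]

lemma etaM_mul_stdBasis {n d : ℕ} (α : Fin d) (i : Fin n) :
    etaM d * (Matrix.single α i (1 : ℂ)) = Matrix.single α.rev i 1 := by
  ext x y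
  rw [etaM_mul]
  simp only [Matrix.single, Matrix.of_apply]
  congr 1
  simp only [eq_iff_iff, and_congr_left_iff]
  intro _
  constructor
  · rintro rfl; simp [Fin.rev_rev]
  · rintro rfl; simp [Fin.rev_rev]

lemma xiCLM_eA (i : Fin n) (α : Fin d) :
    xiCLM n d ξA ξB (eA n d i α) = ξA • eA n d i α.rev := by
  rw [xiCLM_apply]
  simp [eA, stdBasis_mul_etaM, Prod.ext_iff]

lemma xiCLM_eB (α : Fin d) (i : Fin n) :
    xiCLM n d ξA ξB (eB n d α i) = ξB • eB n d α.rev i := by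
  rw [xiCLM_apply]
  simp [eB, etaM_mul_stdBasis, Prod.ext_iff]

lemma fderiv_comp_xi (F : Snd n d → ℂ) (hF : Differentiable ℂ F) (p v : Snd n d) :
    fderiv ℂ (fun q : Snd n d => F (ξA • (q.1 * etaM d), ξB • (etaM d * q.2))) p v
      = fderiv ℂ F (ξA • (p.1 * etaM d), ξB • (etaM d * p.2)) (xiCLM n d ξA ξB v) := by
  have h1 : (fun q : Snd n d => F (ξA • (q.1 * etaM d), ξB • (etaM d * q.2)))
      = F ∘ (xiCLM n d ξA ξB) := rfl
  erw [h1, fderiv_comp p (hF.differentiableAt) ((xiCLM n d ξA ξB).differentiableAt),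
    (xiCLM n d ξA ξB).fderiv]
  rfl

end xi

section bracketLemmas

variable {n d : ℕ} (κ ξA ξB : ℂ) (p : Snd n d)

lemma pAAplus_rev (i k : Fin n) (α β : Fin d) :
    pAAplus n d (-κ) (ξA • (p.1 * etaM d), ξB • (etaM d * p.2)) i k α.rev β.rev
      = ξA * ξA * pAA n d κ p i k α β := by
  simp only [pAAplus, pAA, csgn_rev, Matrix.smul_apply, smul_eq_mul, mul_etaM, Fin.rev_rev]
  ring

lemma pBBplus_rev (i k : Fin n) (α β : Fin d) :
    pBBplus n d (-κ) (ξA • (p.1 * etaM d), ξB • (etaM d * p.2)) i k α.rev β.rev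
      = ξB * ξB * pBB n d κ p i k α β := by
  simp only [pBBplus, pBB, csgn_rev, Matrix.smul_apply, smul_eq_mul, etaM_mul, Fin.rev_rev]
  ring

lemma pABplus_rev (hξκ : ξA * ξB * κ = -1) (i k : Fin n) (α β : Fin d) :
    pABplus n d (-κ) (ξA • (p.1 * etaM d), ξB • (etaM d * p.2)) i α.rev k β.rev
      = (ξA * ξB) * pAB n d κ p i α k β := by
  have hs : (∑ s : Fin n, if i < s then
        ((ξA • (p.1 * etaM d)) s α.rev * (ξB • (etaM d * p.2)) β.rev s) else 0)
      = ξA * ξB * ∑ s : Fin n, (if i < s then p.1 s α * p.2 β s else 0) := by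
    rw [Finset.mul_sum]
    refine Finset.sum_congr rfl fun s _ => ?_
    by_cases h : i < s <;>
      simp [h, Matrix.smul_apply, mul_etaM, etaM_mul, Fin.rev_rev] <;> ring
  have hμ : (∑ μ : Fin d, if α.rev < μ then
        ((ξA • (p.1 * etaM d)) i μ * (ξB • (etaM d * p.2)) μ k) else 0)
      = ξA * ξB * ∑ μ : Fin d, (if μ < α then p.1 i μ * p.2 μ k else 0) := by
    rw [Finset.mul_sum,
      ← Equiv.sum_comp (Fin.revPerm) (fun μ : Fin d => if α.rev < μ then
        ((ξA • (p.1 * etaM d)) i μ * (ξB • (etaM d * p.2)) μ k) else 0)]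
    refine Finset.sum_congr rfl fun μ _ => ?_
    show (if α.rev < μ.rev then
        ((ξA • (p.1 * etaM d)) i μ.rev * (ξB • (etaM d * p.2)) μ.rev k) else 0) = _
    simp only [Fin.rev_lt_rev]
    by_cases h : μ < α <;>
      simp [h, Matrix.smul_apply, mul_etaM, etaM_mul, Fin.rev_rev] <;> ring
  simp only [pABplus, pAB, cdelta_rev]
  rw [hs, hμ]
  simp only [Matrix.smul_apply, smul_eq_mul, mul_etaM, etaM_mul, Fin.rev_rev]
  linear_combination (-(cdelta i k * cdelta α β)) * hξκ

end bracketLemmas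

lemma sum_rev_rev {n d : ℕ} (G : Fin n → Fin d → Fin n → Fin d → ℂ) :
    (∑ i : Fin n, ∑ α : Fin d, ∑ k : Fin n, ∑ β : Fin d, G i α.rev k β.rev)
      = ∑ i : Fin n, ∑ α : Fin d, ∑ k : Fin n, ∑ β : Fin d, G i α k β := by
  refine Finset.sum_congr rfl fun i _ => ?_
  calc (∑ α : Fin d, ∑ k : Fin n, ∑ β : Fin d, G i α.rev k β.rev)
      = ∑ α : Fin d, ∑ k : Fin n, ∑ β : Fin d, G i α.rev k β := by
        refine Finset.sum_congr rfl fun α _ => Finset.sum_congr rfl fun k _ => ?_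
        exact Equiv.sum_comp (Fin.revPerm) (fun β => G i α.rev k β)
    _ = ∑ α : Fin d, ∑ k : Fin n, ∑ β : Fin d, G i α k β :=
        Equiv.sum_comp (Fin.revPerm) (fun α => ∑ k : Fin n, ∑ β : Fin d, G i α k β)

/-- `ξ(A,B) = (ξ_A A η^d, ξ_B η^d B)` with `ξ_A ξ_B = −1/κ` is a Poisson
diffeomorphism from `(S(n,d), {·,·}_κ)` to `(S(n,d), {·,·}^+_{−κ})`. -/
theorem statement4 (n d : ℕ) (hn : 1 ≤ n) (hd : 1 ≤ d) (κ : ℂ) (hκ : κ ≠ 0)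
    (ξA ξB : ℂ) (hξ : ξA * ξB = -(1 / κ)) :
    Function.Bijective
        (fun p : Snd n d => ((ξA • (p.1 * etaM d), ξB • (etaM d * p.2)) : Snd n d)) ∧
    ∀ F H : Snd n d → ℂ, Differentiable ℂ F → Differentiable ℂ H →
      ∀ p : Snd n d,
        brS n d κ (fun q => F (ξA • (q.1 * etaM d), ξB • (etaM d * q.2)))
            (fun q => H (ξA • (q.1 * etaM d), ξB • (etaM d * q.2))) p
          = brP n d (-κ) F H (ξA • (p.1 * etaM d), ξB • (etaM d * p.2)) := by
  classical
  have hξA : ξA ≠ 0 := by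
    intro h; apply hκ
    have : ξA * ξB = 0 := by rw [h, zero_mul]
    rw [this] at hξ
    field_simp at hξ
    simp at hξ
  have hξB : ξB ≠ 0 := by
    intro h; apply hκ
    have : ξA * ξB = 0 := by rw [h, mul_zero]
    rw [this] at hξ
    field_simp at hξ
    simp at hξ
  have hξκ : ξA * ξB * κ = -1 := by
    rw [hξ]; field_simp
  constructor
  · -- bijectivity
    refine Function.bijective_iff_has_inverse.2
      ⟨fun q => (ξA⁻¹ • (q.1 * etaM d), ξB⁻¹ • (etaM d * q.2)), ?_, ?_⟩
    · intro p
      simp only [Matrix.smul_mul, Matrix.mul_smul, smul_smul]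
      rw [Matrix.mul_assoc, etaM_sq, Matrix.mul_one, ← Matrix.mul_assoc, etaM_sq,
        Matrix.one_mul, inv_mul_cancel₀ hξA, inv_mul_cancel₀ hξB, one_smul, one_smul]
    · intro q
      simp only [Matrix.smul_mul, Matrix.mul_smul, smul_smul]
      rw [Matrix.mul_assoc, etaM_sq, Matrix.mul_one, ← Matrix.mul_assoc, etaM_sq,
        Matrix.one_mul, mul_inv_cancel₀ hξA, mul_inv_cancel₀ hξB, one_smul, one_smul]
  · intro F H hF hH p
    set q : Snd n d := (ξA • (p.1 * etaM d), ξB • (etaM d * p.2)) with hqdef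
    have hdF := fderiv_comp_xi n d ξA ξB F hF p
    have hdH := fderiv_comp_xi n d ξA ξB H hH p
    have hFA : ∀ (i : Fin n) (α : Fin d),
        fderiv ℂ (fun q : Snd n d => F (ξA • (q.1 * etaM d), ξB • (etaM d * q.2))) p (eA n d i α)
          = ξA * fderiv ℂ F q (eA n d i α.rev) := by
      intro i α
      rw [hdF, xiCLM_eA, _root_.map_smul, smul_eq_mul]
    have hFB : ∀ (α : Fin d) (i : Fin n),
        fderiv ℂ (fun q : Snd n d => F (ξA • (q.1 * etaM d), ξB • (etaM d * q.2))) p (eB n d α i)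
          = ξB * fderiv ℂ F q (eB n d α.rev i) := by
      intro α i
      rw [hdF, xiCLM_eB, _root_.map_smul, smul_eq_mul]
    have hHA : ∀ (i : Fin n) (α : Fin d),
        fderiv ℂ (fun q : Snd n d => H (ξA • (q.1 * etaM d), ξB • (etaM d * q.2))) p (eA n d i α)
          = ξA * fderiv ℂ H q (eA n d i α.rev) := by
      intro i α
      rw [hdH, xiCLM_eA, _root_.map_smul, smul_eq_mul]
    have hHB : ∀ (α : Fin d) (i : Fin n),
        fderiv ℂ (fun q : Snd n d => H (ξA • (q.1 * etaM d), ξB • (etaM d * q.2))) p (eB n d α i)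
          = ξB * fderiv ℂ H q (eB n d α.rev i) := by
      intro α i
      rw [hdH, xiCLM_eB, _root_.map_smul, smul_eq_mul]
    rw [brS, brP, ← sum_rev_rev (fun i α k β =>
      (pAAplus n d (-κ) q i k α β * fderiv ℂ F q (eA n d i α) * fderiv ℂ H q (eA n d k β)
        + pABplus n d (-κ) q i α k β *
            (fderiv ℂ F q (eA n d i α) * fderiv ℂ H q (eB n d β k)
              - fderiv ℂ H q (eA n d i α) * fderiv ℂ F q (eB n d β k))
        + pBBplus n d (-κ) q i k α β * fderiv ℂ F q (eB n d α i) * fderiv ℂ H q (eB n d β k)))]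
    refine Finset.sum_congr rfl fun i _ => Finset.sum_congr rfl fun α _ =>
      Finset.sum_congr rfl fun k _ => Finset.sum_congr rfl fun β _ => ?_
    rw [hFA, hFB, hHA, hHB, hHA, hFB, hqdef, pAAplus_rev κ ξA ξB p,
      pBBplus_rev κ ξA ξB p, pABplus_rev κ ξA ξB p hξκ]
    ring
end
end

section
/- Let n, d ≥ 1, κ ∈ ℂ∖{0}, and let η^ℓ := Σ_{i=1}^ℓ E_{i,ℓ+1−i} denote the ℓ×ℓ antidiagonal permutation matrix. Then the swap map ν: S(n,d) → S(d,n), ν(A,B) := (η^d B η^n, η^n A η^d), is a bijection, and for all differentiable functions F, H on S(d,n): {F∘ν, H∘ν}_κ = {F, H}_{−κ} ∘ ν. That is, ν is a Poisson diffeomorphism from (S(n,d), {·,·}_κ) to (S(d,n), {·,·}_{−κ}). -/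
open Matrix BigOperators

noncomputable section

attribute [local instance] Matrix.normedAddCommGroup Matrix.normedSpace

/-! ### Auxiliary lemmas -/

lemma etaM_mul_apply {ℓ : ℕ} {m : Type*} [Fintype m] (M : Matrix (Fin ℓ) m ℂ) (a : Fin ℓ)
    (x : m) : (etaM ℓ * M) a x = M a.rev x := by
  rw [Matrix.mul_apply]
  have h : ∀ j : Fin ℓ, ((a : ℕ) + (j : ℕ) + 1 = ℓ) ↔ j = a.rev := by
    intro j
    rw [Fin.ext_iff, Fin.val_rev]
    omega
  calc (∑ j : Fin ℓ, etaM ℓ a j * M j x)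
      = ∑ j : Fin ℓ, (if j = a.rev then M j x else 0) := by
        refine Finset.sum_congr rfl fun j _ => ?_
        simp only [etaM, Matrix.of_apply]
        rw [if_congr (h j) rfl rfl, ite_mul, one_mul, zero_mul]
    _ = M a.rev x := by simp

lemma mul_etaM_apply {ℓ : ℕ} {m : Type*} [Fintype m] (M : Matrix m (Fin ℓ) ℂ) (a : m)
    (x : Fin ℓ) : (M * etaM ℓ) a x = M a x.rev := by
  rw [Matrix.mul_apply]
  have h : ∀ j : Fin ℓ, ((j : ℕ) + (x : ℕ) + 1 = ℓ) ↔ j = x.rev := by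
    intro j
    rw [Fin.ext_iff, Fin.val_rev]
    omega
  calc (∑ j : Fin ℓ, M a j * etaM ℓ j x)
      = ∑ j : Fin ℓ, (if j = x.rev then M a j else 0) := by
        refine Finset.sum_congr rfl fun j _ => ?_
        simp only [etaM, Matrix.of_apply]
        rw [if_congr (h j) rfl rfl, mul_ite, mul_one, mul_zero]
    _ = M a x.rev := by simp

lemma eta_conj_apply {ℓ₁ ℓ₂ : ℕ} (M : Matrix (Fin ℓ₁) (Fin ℓ₂) ℂ) (a : Fin ℓ₁) (x : Fin ℓ₂) :
    (etaM ℓ₁ * M * etaM ℓ₂) a x = M a.rev x.rev := by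
  rw [mul_etaM_apply, etaM_mul_apply]

/-- `ν` as a linear map. -/
def nuL (n d : ℕ) : Snd n d →ₗ[ℂ] Snd d n where
  toFun p := (etaM d * p.2 * etaM n, etaM n * p.1 * etaM d)
  map_add' p q := by
    simp [Prod.ext_iff, Matrix.mul_add, Matrix.add_mul]
  map_smul' c p := by
    simp [Prod.ext_iff, Matrix.mul_smul, Matrix.smul_mul]

/-- `ν` as a continuous linear map. -/
def nuCLM (n d : ℕ) : Snd n d →L[ℂ] Snd d n := (nuL n d).toContinuousLinearMap

lemma nuCLM_apply (n d : ℕ) (p : Snd n d) :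
    nuCLM n d p = (etaM d * p.2 * etaM n, etaM n * p.1 * etaM d) := rfl

lemma nuCLM_eA (n d : ℕ) (i : Fin n) (α : Fin d) :
    nuCLM n d (eA n d i α) = eB d n i.rev α.rev := by
  rw [nuCLM_apply, eA, eB]
  refine Prod.ext ?_ ?_
  · simp
  · dsimp only
    ext a x
    rw [eta_conj_apply]
    simp only [Matrix.single, Matrix.of_apply]
    refine if_congr ?_ rfl rfl
    constructor
    · rintro ⟨h1, h2⟩
      exact ⟨by rw [h1, Fin.rev_rev], by rw [h2, Fin.rev_rev]⟩
    · rintro ⟨h1, h2⟩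
      exact ⟨by rw [← h1, Fin.rev_rev], by rw [← h2, Fin.rev_rev]⟩

lemma nuCLM_eB (n d : ℕ) (α : Fin d) (i : Fin n) :
    nuCLM n d (eB n d α i) = eA d n α.rev i.rev := by
  rw [nuCLM_apply, eA, eB]
  refine Prod.ext ?_ ?_
  · dsimp only
    ext a x
    rw [eta_conj_apply]
    simp only [Matrix.single, Matrix.of_apply]
    refine if_congr ?_ rfl rfl
    constructor
    · rintro ⟨h1, h2⟩
      exact ⟨by rw [h1, Fin.rev_rev], by rw [h2, Fin.rev_rev]⟩
    · rintro ⟨h1, h2⟩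
      exact ⟨by rw [← h1, Fin.rev_rev], by rw [← h2, Fin.rev_rev]⟩
  · simp

lemma csgn_rev_s5 {ℓ : ℕ} (i k : Fin ℓ) :
    csgn (((i.rev : ℕ) : ℤ) - ((k.rev : ℕ) : ℤ)) = -csgn (((i : ℕ) : ℤ) - ((k : ℕ) : ℤ)) := by
  have h : ((i.rev : ℕ) : ℤ) - ((k.rev : ℕ) : ℤ) = -(((i : ℕ) : ℤ) - ((k : ℕ) : ℤ)) := by
    have hi := i.isLt
    have hk := k.isLt
    simp only [Fin.val_rev]
    omega
  rw [h]
  unfold csgn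
  rw [Int.sign_neg, Int.cast_neg]

lemma cdelta_rev_s5 {ℓ : ℕ} (i k : Fin ℓ) : cdelta i.rev k.rev = cdelta i k := by
  simp [cdelta, Fin.rev_inj]

lemma cdelta_comm {ℓ : ℕ} (i k : Fin ℓ) : cdelta i k = cdelta k i := by
  simp [cdelta, eq_comm]

lemma cdelta_mul_congr {ℓ : ℕ} (i k : Fin ℓ) (X Y : ℂ) (h : i = k → X = Y) :
    cdelta i k * X = cdelta i k * Y := by
  unfold cdelta
  by_cases hik : i = k
  · rw [h hik]
  · simp [hik]

lemma sum_rev {ℓ : ℕ} (f : Fin ℓ → ℂ) : (∑ i, f i) = ∑ i : Fin ℓ, f (Fin.rev i) :=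
  (Fintype.sum_bijective Fin.rev Fin.rev_bijective (fun i => f (Fin.rev i)) f
    (fun _ => rfl)).symm

lemma sum4_swap {A B : Type*} [Fintype A] [Fintype B] (f : A → B → A → B → ℂ) :
    (∑ i, ∑ α, ∑ k, ∑ β, f i α k β) = ∑ i, ∑ α, ∑ k, ∑ β, f k β i α := by
  calc (∑ i, ∑ α, ∑ k, ∑ β, f i α k β)
      = ∑ i, ∑ k, ∑ α, ∑ β, f i α k β :=
        Finset.sum_congr rfl fun i _ => Finset.sum_comm
    _ = ∑ k, ∑ i, ∑ α, ∑ β, f i α k β := Finset.sum_comm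
    _ = ∑ k, ∑ i, ∑ β, ∑ α, f i α k β :=
        Finset.sum_congr rfl fun k _ => Finset.sum_congr rfl fun i _ => Finset.sum_comm
    _ = ∑ k, ∑ β, ∑ i, ∑ α, f i α k β :=
        Finset.sum_congr rfl fun k _ => Finset.sum_comm

lemma sum4_rev {a b : ℕ} (f : Fin a → Fin b → Fin a → Fin b → ℂ) :
    (∑ i, ∑ α, ∑ k, ∑ β, f i α k β)
      = ∑ i : Fin a, ∑ α : Fin b, ∑ k : Fin a, ∑ β : Fin b,
          f (Fin.rev i) (Fin.rev α) (Fin.rev k) (Fin.rev β) := by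
  rw [sum_rev]
  refine Finset.sum_congr rfl fun i _ => ?_
  rw [sum_rev]
  refine Finset.sum_congr rfl fun α _ => ?_
  rw [sum_rev]
  refine Finset.sum_congr rfl fun k _ => ?_
  rw [sum_rev]

lemma sum4_pairswap {A B : Type*} [Fintype A] [Fintype B] (f : A → B → A → B → ℂ) :
    (∑ i, ∑ α, ∑ k, ∑ β, f i α k β) = ∑ α : B, ∑ i : A, ∑ β : B, ∑ k : A, f i α k β := by
  calc (∑ i, ∑ α, ∑ k, ∑ β, f i α k β)
      = ∑ α : B, ∑ i : A, ∑ k, ∑ β, f i α k β := Finset.sum_comm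
    _ = ∑ α : B, ∑ i : A, ∑ β, ∑ k, f i α k β :=
        Finset.sum_congr rfl fun α _ => Finset.sum_congr rfl fun i _ => Finset.sum_comm

section Coeffs

variable {n d : ℕ}

lemma coeff_AA (κ : ℂ) (p : Snd n d) (i k : Fin n) (α β : Fin d) :
    pAA n d κ p i k α β
      = pBB d n (-κ) (etaM d * p.2 * etaM n, etaM n * p.1 * etaM d) α.rev β.rev i.rev k.rev := by
  simp only [pAA, pBB, csgn_rev_s5, eta_conj_apply, Fin.rev_rev]
  ring

lemma coeff_BB (κ : ℂ) (p : Snd n d) (i k : Fin n) (α β : Fin d) :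
    pBB n d κ p i k α β
      = pAA d n (-κ) (etaM d * p.2 * etaM n, etaM n * p.1 * etaM d) α.rev β.rev i.rev k.rev := by
  simp only [pAA, pBB, csgn_rev_s5, eta_conj_apply, Fin.rev_rev]
  ring

lemma coeff_AB (κ : ℂ) (p : Snd n d) (i k : Fin n) (α β : Fin d) :
    pAB n d κ p i α k β
      = -pAB d n (-κ) (etaM d * p.2 * etaM n, etaM n * p.1 * etaM d) β.rev k.rev α.rev i.rev := by
  simp only [pAB, eta_conj_apply, Fin.rev_rev]
  have h1 : (∑ x : Fin d, if β.rev < x then p.2 x.rev k * p.1 i x.rev else 0)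
      = ∑ μ : Fin d, if μ < β then p.1 i μ * p.2 μ k else 0 := by
    rw [sum_rev]
    refine Finset.sum_congr rfl fun μ _ => ?_
    simp only [Fin.rev_rev]
    exact if_congr Fin.rev_lt_rev (mul_comm _ _) rfl
  have h2 : (∑ x : Fin n, if x < k.rev then p.2 β x.rev * p.1 x.rev α else 0)
      = ∑ s : Fin n, if k < s then p.1 s α * p.2 β s else 0 := by
    rw [sum_rev]
    refine Finset.sum_congr rfl fun s _ => ?_
    simp only [Fin.rev_rev]
    exact if_congr Fin.rev_lt_rev (mul_comm _ _) rfl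
  rw [h1, h2, cdelta_rev_s5, cdelta_rev_s5, cdelta_comm β α, cdelta_comm k i]
  have e1 : cdelta i k * (∑ s : Fin n, if i < s then p.1 s α * p.2 β s else 0)
      = cdelta i k * (∑ s : Fin n, if k < s then p.1 s α * p.2 β s else 0) :=
    cdelta_mul_congr _ _ _ _ fun h => by rw [h]
  have e2 : cdelta α β * (∑ μ : Fin d, if μ < α then p.1 i μ * p.2 μ k else 0)
      = cdelta α β * (∑ μ : Fin d, if μ < β then p.1 i μ * p.2 μ k else 0) :=
    cdelta_mul_congr _ _ _ _ fun h => by rw [h]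
  rw [mul_assoc κ (cdelta i k), e1, mul_assoc κ (cdelta α β), e2]
  ring

/-- The main sum identity, stated for abstract "partial derivative" data. -/
lemma main_sum (κ : ℂ) (p : Snd n d)
    (DFA DHA : Fin d → Fin n → ℂ) (DFB DHB : Fin n → Fin d → ℂ) :
    (∑ i : Fin n, ∑ α : Fin d, ∑ k : Fin n, ∑ β : Fin d,
      (pAA n d κ p i k α β * DFB i.rev α.rev * DHB k.rev β.rev
        + pAB n d κ p i α k β *
            (DFB i.rev α.rev * DHA β.rev k.rev - DHB i.rev α.rev * DFA β.rev k.rev)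
        + pBB n d κ p i k α β * DFA α.rev i.rev * DHA β.rev k.rev))
    = ∑ i : Fin d, ∑ α : Fin n, ∑ k : Fin d, ∑ β : Fin n,
      (pAA d n (-κ) (etaM d * p.2 * etaM n, etaM n * p.1 * etaM d) i k α β
            * DFA i α * DHA k β
        + pAB d n (-κ) (etaM d * p.2 * etaM n, etaM n * p.1 * etaM d) i α k β *
            (DFA i α * DHB β k - DHA i α * DFB β k)
        + pBB d n (-κ) (etaM d * p.2 * etaM n, etaM n * p.1 * etaM d) i k α β
            * DFB α i * DHB β k) := by
  set q : Snd d n := (etaM d * p.2 * etaM n, etaM n * p.1 * etaM d) with hq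
  conv_rhs => rw [sum4_pairswap, sum4_rev]
  -- now both sides are quadruple sums over `Fin n, Fin d, Fin n, Fin d`
  simp only [Finset.sum_add_distrib]
  have hAA : (∑ i : Fin n, ∑ α : Fin d, ∑ k : Fin n, ∑ β : Fin d,
        pAA n d κ p i k α β * DFB i.rev α.rev * DHB k.rev β.rev)
      = ∑ i : Fin n, ∑ α : Fin d, ∑ k : Fin n, ∑ β : Fin d,
        pBB d n (-κ) q α.rev β.rev i.rev k.rev * DFB i.rev α.rev * DHB k.rev β.rev := by
    refine Finset.sum_congr rfl fun i _ => Finset.sum_congr rfl fun α _ =>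
      Finset.sum_congr rfl fun k _ => Finset.sum_congr rfl fun β _ => ?_
    rw [coeff_AA κ p i k α β]
  have hBB : (∑ i : Fin n, ∑ α : Fin d, ∑ k : Fin n, ∑ β : Fin d,
        pBB n d κ p i k α β * DFA α.rev i.rev * DHA β.rev k.rev)
      = ∑ i : Fin n, ∑ α : Fin d, ∑ k : Fin n, ∑ β : Fin d,
        pAA d n (-κ) q α.rev β.rev i.rev k.rev * DFA α.rev i.rev * DHA β.rev k.rev := by
    refine Finset.sum_congr rfl fun i _ => Finset.sum_congr rfl fun α _ =>
      Finset.sum_congr rfl fun k _ => Finset.sum_congr rfl fun β _ => ?_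
    rw [coeff_BB κ p i k α β]
  have hAB : (∑ i : Fin n, ∑ α : Fin d, ∑ k : Fin n, ∑ β : Fin d,
        pAB n d κ p i α k β *
          (DFB i.rev α.rev * DHA β.rev k.rev - DHB i.rev α.rev * DFA β.rev k.rev))
      = ∑ i : Fin n, ∑ α : Fin d, ∑ k : Fin n, ∑ β : Fin d,
        pAB d n (-κ) q α.rev i.rev β.rev k.rev *
          (DFA α.rev i.rev * DHB k.rev β.rev - DHA α.rev i.rev * DFB k.rev β.rev) := by
    rw [sum4_swap (fun i α k β => pAB n d κ p i α k β *
      (DFB i.rev α.rev * DHA β.rev k.rev - DHB i.rev α.rev * DFA β.rev k.rev))]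
    refine Finset.sum_congr rfl fun i _ => Finset.sum_congr rfl fun α _ =>
      Finset.sum_congr rfl fun k _ => Finset.sum_congr rfl fun β _ => ?_
    beta_reduce
    rw [coeff_AB κ p k i β α]
    ring
  rw [hAA, hAB, hBB]
  ring

end Coeffs

/-- the swap map `ν(A,B) = (η^d B η^n, η^n A η^d)` is a Poisson diffeomorphism
from `(S(n,d), {·,·}_κ)` to `(S(d,n), {·,·}_{−κ})`. -/
theorem statement5 (n d : ℕ) (hn : 1 ≤ n) (hd : 1 ≤ d) (κ : ℂ) (hκ : κ ≠ 0) :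
    Function.Bijective
        (fun p : Snd n d => ((etaM d * p.2 * etaM n, etaM n * p.1 * etaM d) : Snd d n)) ∧
    ∀ F H : Snd d n → ℂ, Differentiable ℂ F → Differentiable ℂ H →
      ∀ p : Snd n d,
        brS n d κ (fun q => F (etaM d * q.2 * etaM n, etaM n * q.1 * etaM d))
            (fun q => H (etaM d * q.2 * etaM n, etaM n * q.1 * etaM d)) p
          = brS d n (-κ) F H (etaM d * p.2 * etaM n, etaM n * p.1 * etaM d) := by
  constructor
  · refine Function.bijective_iff_has_inverse.mpr
      ⟨fun q : Snd d n => ((etaM n * q.2 * etaM d, etaM d * q.1 * etaM n) : Snd n d), ?_, ?_⟩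
    · intro p
      refine Prod.ext ?_ ?_ <;> ext a x <;>
        simp [eta_conj_apply, Fin.rev_rev]
    · intro q
      refine Prod.ext ?_ ?_ <;> ext a x <;>
        simp [eta_conj_apply, Fin.rev_rev]
  · intro F H hF hH p
    have hFd : ∀ v : Snd n d,
        fderiv ℂ (fun r : Snd n d => F (etaM d * r.2 * etaM n, etaM n * r.1 * etaM d)) p v
          = fderiv ℂ F (etaM d * p.2 * etaM n, etaM n * p.1 * etaM d) (nuCLM n d v) := by
      intro v
      have hcomp : (fun r : Snd n d => F (etaM d * r.2 * etaM n, etaM n * r.1 * etaM d))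
          = F ∘ (nuCLM n d) := rfl
      erw [hcomp, fderiv_comp (x := p) (hF _) ((nuCLM n d).differentiableAt), (nuCLM n d).fderiv]
      rfl
    have hHd : ∀ v : Snd n d,
        fderiv ℂ (fun r : Snd n d => H (etaM d * r.2 * etaM n, etaM n * r.1 * etaM d)) p v
          = fderiv ℂ H (etaM d * p.2 * etaM n, etaM n * p.1 * etaM d) (nuCLM n d v) := by
      intro v
      have hcomp : (fun r : Snd n d => H (etaM d * r.2 * etaM n, etaM n * r.1 * etaM d))
          = H ∘ (nuCLM n d) := rfl
      erw [hcomp, fderiv_comp (x := p) (hH _) ((nuCLM n d).differentiableAt), (nuCLM n d).fderiv]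
      rfl
    simp only [brS, hFd, hHd, nuCLM_eA, nuCLM_eB]
    exact main_sum κ p
      (fun x y => fderiv ℂ F (etaM d * p.2 * etaM n, etaM n * p.1 * etaM d) (eA d n x y))
      (fun x y => fderiv ℂ H (etaM d * p.2 * etaM n, etaM n * p.1 * etaM d) (eA d n x y))
      (fun x y => fderiv ℂ F (etaM d * p.2 * etaM n, etaM n * p.1 * etaM d) (eB d n x y))
      (fun x y => fderiv ℂ H (etaM d * p.2 * etaM n, etaM n * p.1 * etaM d) (eB d n x y))
end
end

section
/- Let n ≥ 2, d ≥ 1, κ ∈ ℂ∖{0}, let U ⊆ S(n,d) be open, and let φ₊, φ₋: U → GL(n,ℂ) be differentiable maps satisfying, for all points of U and all indices (componentwise): {A_{iα}, (φ_±)_{kl}}_κ = −κ Σ_{j,q} (r_∓^n)_{(ik),(jq)} A_{jα} (φ_±)_{ql} and {B_{αi}, (φ_±)_{kl}}_κ = κ Σ_{m,q} B_{αm} (r_∓^n)_{(mk),(iq)} (φ_±)_{ql} (in tensor notation: {A₁, (φ_±)₂}_κ = −κ r_∓^n A₁ (φ_±)₂ and {B₁, (φ_±)₂}_κ = κ B₁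 r_∓^n (φ_±)₂). Then φ := φ₊ φ₋⁻¹ satisfies, in the same notation, {A₁, φ₂}_κ = κ (φ₂ r₊^n − r₋^n φ₂) A₁ and {B₁, φ₂}_κ = κ B₁ (r₋^n φ₂ − φ₂ r₊^n) on U. -/
open Matrix BigOperators

noncomputable section

attribute [local instance] Matrix.normedAddCommGroup Matrix.normedSpace

/-- The entry `(r^n)_{(ik),(jl)}` of `r^n = (1/2) Σ_{p<q} (E_{pq}⊗E_{qp} − E_{qp}⊗E_{pq})`,
i.e. the coefficient of `E_{ij}⊗E_{kl}`. -/
def rnE (n : ℕ) (i k j l : Fin n) : ℂ :=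
  (1 / 2) * ∑ p : Fin n, ∑ q : Fin n,
    (if p < q then
      (if i = p ∧ j = q then (1 : ℂ) else 0) * (if k = q ∧ l = p then 1 else 0)
        - (if i = q ∧ j = p then (1 : ℂ) else 0) * (if k = p ∧ l = q then 1 else 0)
      else 0)

/-- The entry `(I^n)_{(ik),(jl)}` of `I^n = Σ_{p,q} E_{pq}⊗E_{qp}`. -/
def InE (n : ℕ) (i k j l : Fin n) : ℂ :=
  ∑ p : Fin n, ∑ q : Fin n,
    (if i = p ∧ j = q then (1 : ℂ) else 0) * (if k = q ∧ l = p then 1 else 0)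

/-- entries of `r_+^n = r^n + (1/2) I^n`. -/
def rPE (n : ℕ) (i k j l : Fin n) : ℂ := rnE n i k j l + (1 / 2) * InE n i k j l

/-- entries of `r_-^n = r^n - (1/2) I^n`. -/
def rME (n : ℕ) (i k j l : Fin n) : ℂ := rnE n i k j l - (1 / 2) * InE n i k j l

/-- entries of `M ⊗ 1ₙ`. -/
def one1 (n : ℕ) (M : Matrix (Fin n) (Fin n) ℂ) (i k j l : Fin n) : ℂ :=
  if k = l then M i j else 0

/-- entries of `1ₙ ⊗ M`. -/
def one2 (n : ℕ) (M : Matrix (Fin n) (Fin n) ℂ) (i k j l : Fin n) : ℂ :=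
  if i = j then M k l else 0

/-- product of elements of `Mat_n(ℂ) ⊗ Mat_n(ℂ)` in entry form. -/
def tmul (n : ℕ) (S T : Fin n → Fin n → Fin n → Fin n → ℂ) (i k j l : Fin n) : ℂ :=
  ∑ p : Fin n, ∑ q : Fin n, S i k p q * T p q j l


/-! ### Auxiliary machinery -/

/-- linear-in-`L` version of `brS`. -/
def brL (n d : ℕ) (κ : ℂ) (F : Snd n d → ℂ) (p : Snd n d) (L : Snd n d →L[ℂ] ℂ) : ℂ :=
  ∑ i : Fin n, ∑ α : Fin d, ∑ k : Fin n, ∑ β : Fin d,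
    (pAA n d κ p i k α β * fderiv ℂ F p (eA n d i α) * L (eA n d k β)
      + pAB n d κ p i α k β *
          (fderiv ℂ F p (eA n d i α) * L (eB n d β k)
            - L (eA n d i α) * fderiv ℂ F p (eB n d β k))
      + pBB n d κ p i k α β * fderiv ℂ F p (eB n d α i) * L (eB n d β k))

lemma brS_eq_brL (n d : ℕ) (κ : ℂ) (F H : Snd n d → ℂ) (p : Snd n d) :
    brS n d κ F H p = brL n d κ F p (fderiv ℂ H p) := rfl

lemma brL_add (n d : ℕ) (κ : ℂ) (F : Snd n d → ℂ) (p : Snd n d) (L L' : Snd n d →L[ℂ] ℂ) :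
    brL n d κ F p (L + L') = brL n d κ F p L + brL n d κ F p L' := by
  simp only [brL, ContinuousLinearMap.add_apply, ← Finset.sum_add_distrib]
  exact Finset.sum_congr rfl fun _ _ => Finset.sum_congr rfl fun _ _ =>
    Finset.sum_congr rfl fun _ _ => Finset.sum_congr rfl fun _ _ => by ring

lemma brL_smul (n d : ℕ) (κ : ℂ) (F : Snd n d → ℂ) (p : Snd n d) (c : ℂ)
    (L : Snd n d →L[ℂ] ℂ) : brL n d κ F p (c • L) = c * brL n d κ F p L := by
  simp only [brL, ContinuousLinearMap.coe_smul', Pi.smul_apply, smul_eq_mul, Finset.mul_sum]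
  exact Finset.sum_congr rfl fun _ _ => Finset.sum_congr rfl fun _ _ =>
    Finset.sum_congr rfl fun _ _ => Finset.sum_congr rfl fun _ _ => by ring

/-- `brL` as a linear map in `L`. -/
def brLlin (n d : ℕ) (κ : ℂ) (F : Snd n d → ℂ) (p : Snd n d) :
    (Snd n d →L[ℂ] ℂ) →ₗ[ℂ] ℂ where
  toFun := brL n d κ F p
  map_add' := brL_add n d κ F p
  map_smul' := brL_smul n d κ F p

lemma brL_zero (n d : ℕ) (κ : ℂ) (F : Snd n d → ℂ) (p : Snd n d) :
    brL n d κ F p 0 = 0 := by simp [brL]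

lemma brS_congr {n d : ℕ} {κ : ℂ} {F H H' : Snd n d → ℂ} {p : Snd n d}
    (h : H =ᶠ[nhds p] H') : brS n d κ F H p = brS n d κ F H' p := by
  rw [brS_eq_brL, brS_eq_brL, h.fderiv_eq]

lemma brS_const (n d : ℕ) (κ : ℂ) (F : Snd n d → ℂ) (p : Snd n d) (c : ℂ) :
    brS n d κ F (fun _ => c) p = 0 := by
  rw [brS_eq_brL, fderiv_const_apply, brL_zero]

lemma brS_mul {n d : ℕ} {κ : ℂ} {F H1 H2 : Snd n d → ℂ} {p : Snd n d}
    (h1 : DifferentiableAt ℂ H1 p) (h2 : DifferentiableAt ℂ H2 p) :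
    brS n d κ F (fun q => H1 q * H2 q) p
      = H2 p * brS n d κ F H1 p + H1 p * brS n d κ F H2 p := by
  have : brS n d κ F (fun q => H1 q * H2 q) p
      = brLlin n d κ F p (H1 p • fderiv ℂ H2 p + H2 p • fderiv ℂ H1 p) := by
    rw [brS_eq_brL, show fderiv ℂ (fun q => H1 q * H2 q) p = _ from fderiv_fun_mul h1 h2]; rfl
  rw [this, map_add, _root_.map_smul, _root_.map_smul, smul_eq_mul, smul_eq_mul]
  rw [brS_eq_brL, brS_eq_brL]
  ring_nf
  rfl

lemma brS_sum {n d : ℕ} {κ : ℂ} {F : Snd n d → ℂ} {p : Snd n d} {ι : Type*}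
    (s : Finset ι) (H : ι → Snd n d → ℂ) (h : ∀ i ∈ s, DifferentiableAt ℂ (H i) p) :
    brS n d κ F (fun q => ∑ i ∈ s, H i q) p = ∑ i ∈ s, brS n d κ F (H i) p := by
  have : brS n d κ F (fun q => ∑ i ∈ s, H i q) p
      = brLlin n d κ F p (∑ i ∈ s, fderiv ℂ (H i) p) := by
    rw [brS_eq_brL, show fderiv ℂ (fun q => ∑ i ∈ s, H i q) p = _ from fderiv_fun_sum h]; rfl
  rw [this, map_sum]; rfl

lemma diff_det {n d : ℕ} {M : Snd n d → Matrix (Fin n) (Fin n) ℂ} {p : Snd n d}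
    (h : ∀ a b, DifferentiableAt ℂ (fun q => M q a b) p) :
    DifferentiableAt ℂ (fun q => (M q).det) p := by
  simp only [Matrix.det_apply']
  refine DifferentiableAt.fun_sum fun σ _ => DifferentiableAt.const_mul ?_ _
  exact (HasFDerivAt.finset_prod fun i _ =>
    (h (σ i) i).hasFDerivAt).differentiableAt

lemma diff_inv_entry {n d : ℕ} {φm : Snd n d → Matrix (Fin n) (Fin n) ℂ} {p : Snd n d}
    (hent : ∀ a b, DifferentiableAt ℂ (fun q => φm q a b) p)
    (hdet : (φm p).det ≠ 0) (a b : Fin n) :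
    DifferentiableAt ℂ (fun q => (φm q)⁻¹ a b) p := by
  have hdd : DifferentiableAt ℂ (fun q => (φm q).det) p := diff_det hent
  have hadj : DifferentiableAt ℂ (fun q => (φm q).adjugate a b) p := by
    simp only [Matrix.adjugate_apply]
    refine diff_det fun c e => ?_
    by_cases hc : c = b
    · simp only [Matrix.updateRow_apply, hc, if_pos rfl]
      exact differentiableAt_const _
    · simp only [Matrix.updateRow_apply, if_neg hc]
      exact hent c e
  have heq : (fun q => (φm q)⁻¹ a b)
      = fun q => ((φm q).det)⁻¹ * (φm q).adjugate a b := by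
    funext q
    rw [Matrix.inv_def, Matrix.smul_apply, Ring.inverse_eq_inv', smul_eq_mul]
  rw [heq]
  exact (hdd.inv hdet).mul hadj

lemma inv_bracket {n d : ℕ} {κ : ℂ} (F : Snd n d → ℂ)
    {U : Set (Snd n d)} (hU : IsOpen U) {p : Snd n d} (hp : p ∈ U)
    {φm : Snd n d → Matrix (Fin n) (Fin n) ℂ}
    (hφmd : ∀ k l, DifferentiableOn ℂ (fun q => φm q k l) U)
    (hφmu : ∀ q ∈ U, IsUnit (φm q).det) (m l : Fin n) :
    brS n d κ F (fun q => (φm q)⁻¹ m l) p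
      = -∑ a : Fin n, ∑ b : Fin n,
          (φm p)⁻¹ m a * brS n d κ F (fun q => φm q a b) p * (φm p)⁻¹ b l := by
  have hent : ∀ a b, DifferentiableAt ℂ (fun q => φm q a b) p := fun a b =>
    (hφmd a b).differentiableAt (hU.mem_nhds hp)
  have hdet : (φm p).det ≠ 0 := by
    simpa using (hφmu p hp).ne_zero
  have hinv : ∀ a b, DifferentiableAt ℂ (fun q => (φm q)⁻¹ a b) p :=
    diff_inv_entry hent hdet
  -- key identity: Σ_b brS(φm a b) inv b l + Σ_b φm a b brS(inv b l) = 0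
  have key : ∀ a l', ∑ b : Fin n, ((φm p)⁻¹ b l' * brS n d κ F (fun q => φm q a b) p
      + φm p a b * brS n d κ F (fun q => (φm q)⁻¹ b l') p) = 0 := by
    intro a l'
    have h1 : brS n d κ F (fun q => ∑ b : Fin n, φm q a b * (φm q)⁻¹ b l') p
        = ∑ b : Fin n, ((φm p)⁻¹ b l' * brS n d κ F (fun q => φm q a b) p
          + φm p a b * brS n d κ F (fun q => (φm q)⁻¹ b l') p) := by
      rw [brS_sum Finset.univ (fun b q => φm q a b * (φm q)⁻¹ b l')
        (fun b _ => (hent a b).mul (hinv b l'))]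
      exact Finset.sum_congr rfl fun b _ => brS_mul (hent a b) (hinv b l')
    have h2 : (fun q => ∑ b : Fin n, φm q a b * (φm q)⁻¹ b l')
        =ᶠ[nhds p] (fun _ => if a = l' then (1:ℂ) else 0) := by
      refine Filter.eventuallyEq_of_mem (hU.mem_nhds hp) fun q hq => ?_
      rw [← Matrix.mul_apply, Matrix.mul_nonsing_inv _ (hφmu q hq), Matrix.one_apply]
    rw [brS_congr h2, brS_const] at h1
    exact h1.symm
  -- matrix form
  set Iv : Matrix (Fin n) (Fin n) ℂ := (φm p)⁻¹ with hIv
  set Mm : Matrix (Fin n) (Fin n) ℂ :=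
    Matrix.of fun a b => brS n d κ F (fun q => φm q a b) p with hMm
  set X : Matrix (Fin n) (Fin n) ℂ :=
    Matrix.of fun a b => brS n d κ F (fun q => (φm q)⁻¹ a b) p with hX
  have hmat : φm p * X = -(Mm * Iv) := by
    ext a l'
    have := key a l'
    rw [Finset.sum_add_distrib] at this
    simp only [Matrix.mul_apply, Matrix.neg_apply, hX, hMm, hIv, Matrix.of_apply]
    have h3 : ∑ b : Fin n, φm p a b * brS n d κ F (fun q => (φm q)⁻¹ b l') p
        = -∑ b : Fin n, (φm p)⁻¹ b l' * brS n d κ F (fun q => φm q a b) p := by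
      linear_combination this
    rw [h3]
    congr 1
    exact Finset.sum_congr rfl fun b _ => by ring
  have hXeq : X = -(Iv * (Mm * Iv)) := by
    have := Matrix.nonsing_inv_mul_cancel_left (φm p) X (hφmu p hp)
    rw [hmat] at this
    rw [← this, Matrix.mul_neg]
  have : brS n d κ F (fun q => (φm q)⁻¹ m l) p = X m l := rfl
  rw [this, hXeq]
  simp only [Matrix.neg_apply, Matrix.mul_apply, neg_inj, Finset.mul_sum, hMm,
    Matrix.of_apply]
  exact Finset.sum_congr rfl fun a _ => Finset.sum_congr rfl fun b _ => by ring

lemma prod_bracket {n d : ℕ} {κ : ℂ} (F : Snd n d → ℂ)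
    {U : Set (Snd n d)} (hU : IsOpen U) {p : Snd n d} (hp : p ∈ U)
    {φp φm : Snd n d → Matrix (Fin n) (Fin n) ℂ}
    (hφpd : ∀ k l, DifferentiableOn ℂ (fun q => φp q k l) U)
    (hφmd : ∀ k l, DifferentiableOn ℂ (fun q => φm q k l) U)
    (hφmu : ∀ q ∈ U, IsUnit (φm q).det) (k l : Fin n) :
    brS n d κ F (fun q => (φp q * (φm q)⁻¹) k l) p
      = ∑ m : Fin n, brS n d κ F (fun q => φp q k m) p * (φm p)⁻¹ m l
        - ∑ a : Fin n, ∑ b : Fin n, (φp p * (φm p)⁻¹) k a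
            * brS n d κ F (fun q => φm q a b) p * (φm p)⁻¹ b l := by
  have hentp : ∀ a b, DifferentiableAt ℂ (fun q => φp q a b) p := fun a b =>
    (hφpd a b).differentiableAt (hU.mem_nhds hp)
  have hentm : ∀ a b, DifferentiableAt ℂ (fun q => φm q a b) p := fun a b =>
    (hφmd a b).differentiableAt (hU.mem_nhds hp)
  have hdet : (φm p).det ≠ 0 := by simpa using (hφmu p hp).ne_zero
  have hinv : ∀ a b, DifferentiableAt ℂ (fun q => (φm q)⁻¹ a b) p :=
    diff_inv_entry hentm hdet
  have hfun : (fun q => (φp q * (φm q)⁻¹) k l)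
      = fun q => ∑ m : Fin n, φp q k m * (φm q)⁻¹ m l := by
    funext q; rw [Matrix.mul_apply]
  rw [hfun, brS_sum Finset.univ (fun m q => φp q k m * (φm q)⁻¹ m l) (fun m _ => (hentp k m).mul (hinv m l))]
  have step : ∀ m : Fin n, brS n d κ F (fun q => φp q k m * (φm q)⁻¹ m l) p
      = (φm p)⁻¹ m l * brS n d κ F (fun q => φp q k m) p
        + φp p k m * (-∑ a : Fin n, ∑ b : Fin n,
            (φm p)⁻¹ m a * brS n d κ F (fun q => φm q a b) p * (φm p)⁻¹ b l) := by
    intro m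
    rw [brS_mul (hentp k m) (hinv m l), inv_bracket F hU hp hφmd hφmu m l]
  rw [Finset.sum_congr rfl fun m _ => step m, Finset.sum_add_distrib, sub_eq_add_neg]
  congr 1
  · exact Finset.sum_congr rfl fun m _ => by ring
  · simp only [mul_neg, Finset.mul_sum, Matrix.mul_apply, Finset.sum_mul,
      ← Finset.sum_neg_distrib]
    rw [Finset.sum_comm]
    refine Finset.sum_congr rfl fun a _ => ?_
    rw [Finset.sum_comm]
    exact Finset.sum_congr rfl fun b _ => Finset.sum_congr rfl fun m _ => by ring

/-! ### sum-shuffling helper lemmas -/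

lemma collapse_right {n : ℕ} {Φ Iv : Matrix (Fin n) (Fin n) ℂ}
    (hMI : ∀ q' l', ∑ b : Fin n, Φ q' b * Iv b l' = if q' = l' then (1:ℂ) else 0)
    (c : Fin n → ℂ) (l : Fin n) :
    ∑ b : Fin n, (∑ q' : Fin n, c q' * Φ q' b) * Iv b l = c l := by
  simp only [Finset.sum_mul]
  rw [Finset.sum_comm]
  simp only [mul_assoc, ← Finset.mul_sum, hMI, mul_ite, mul_one, mul_zero,
    Finset.sum_ite_eq', Finset.mem_univ, if_true]

lemma key_gen {n : ℕ} {Φ Iv : Matrix (Fin n) (Fin n) ℂ}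
    (hMI : ∀ q' l', ∑ b : Fin n, Φ q' b * Iv b l' = if q' = l' then (1:ℂ) else 0)
    (g c0 : ℂ) (w : Fin n → Fin n → ℂ) (l : Fin n) :
    ∑ b : Fin n, g * (c0 * ∑ j : Fin n, ∑ q' : Fin n, w j q' * Φ q' b) * Iv b l
      = g * (c0 * ∑ j : Fin n, w j l) := by
  simp only [mul_assoc, ← Finset.mul_sum]
  congr 1
  congr 1
  simp only [Finset.sum_mul]
  rw [Finset.sum_comm]
  refine Finset.sum_congr rfl fun j _ => ?_
  rw [Finset.sum_comm]
  simp only [mul_assoc, ← Finset.mul_sum, hMI, mul_ite, mul_one, mul_zero,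
    Finset.sum_ite_eq', Finset.mem_univ, if_true]

lemma first_gen {n : ℕ} (c0 : ℂ) (w : Fin n → Fin n → ℂ)
    (P Iv : Matrix (Fin n) (Fin n) ℂ) (l : Fin n) :
    ∑ m : Fin n, (c0 * ∑ j : Fin n, ∑ q' : Fin n, w j q' * P q' m) * Iv m l
      = c0 * ∑ j : Fin n, ∑ q' : Fin n, w j q' * (P * Iv) q' l := by
  simp only [Matrix.mul_apply, Finset.sum_mul, Finset.mul_sum]
  rw [Finset.sum_comm]
  refine Finset.sum_congr rfl fun j _ => ?_
  rw [Finset.sum_comm]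
  exact Finset.sum_congr rfl fun q' _ => Finset.sum_congr rfl fun m _ => by ring

lemma sepA {n : ℕ} (c0 : ℂ) (c : Fin n → Fin n → ℂ) (e : Fin n → ℂ)
    (G : Fin n → Fin n → ℂ) (l : Fin n) :
    c0 * ∑ j : Fin n, ∑ q' : Fin n, (c j q' * e j) * G q' l
      = ∑ j : Fin n, c0 * (∑ q' : Fin n, c j q' * G q' l) * e j := by
  simp only [Finset.mul_sum, Finset.sum_mul]
  exact Finset.sum_congr rfl fun j _ => Finset.sum_congr rfl fun q' _ => by ring

lemma sepB {n : ℕ} (c0 : ℂ) (c : Fin n → Fin n → ℂ) (e : Fin n → ℂ)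
    (G : Fin n → Fin n → ℂ) (l : Fin n) :
    c0 * ∑ j : Fin n, ∑ q' : Fin n, (e j * c j q') * G q' l
      = ∑ j : Fin n, c0 * (e j * ∑ q' : Fin n, c j q' * G q' l) := by
  simp only [Finset.mul_sum, Finset.sum_mul]
  exact Finset.sum_congr rfl fun j _ => Finset.sum_congr rfl fun q' _ => by ring

lemma swapA {n : ℕ} (f : Fin n → ℂ) (c0 : ℂ) (c : Fin n → Fin n → ℂ)
    (e : Fin n → ℂ) :
    ∑ a : Fin n, f a * (c0 * ∑ j : Fin n, c a j * e j)
      = ∑ j : Fin n, c0 * (∑ a : Fin n, f a * c a j) * e j := by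
  simp only [Finset.mul_sum, Finset.sum_mul]
  rw [Finset.sum_comm]
  exact Finset.sum_congr rfl fun j _ => Finset.sum_congr rfl fun a _ => by ring

lemma swapB {n : ℕ} (f : Fin n → ℂ) (c0 : ℂ) (c : Fin n → Fin n → ℂ)
    (e : Fin n → ℂ) :
    ∑ a : Fin n, f a * (c0 * ∑ j : Fin n, e j * c a j)
      = ∑ j : Fin n, c0 * (e j * ∑ a : Fin n, f a * c a j) := by
  simp only [Finset.mul_sum, Finset.sum_mul]
  rw [Finset.sum_comm]
  exact Finset.sum_congr rfl fun j _ => Finset.sum_congr rfl fun a _ => by ring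

lemma tmul_one2_left {n : ℕ} (G : Matrix (Fin n) (Fin n) ℂ)
    (T : Fin n → Fin n → Fin n → Fin n → ℂ) (x y z w : Fin n) :
    tmul n (one2 n G) T x y z w = ∑ a : Fin n, G y a * T x a z w := by
  simp [tmul, one2, ite_mul, zero_mul, Finset.sum_ite_eq]

lemma tmul_one2_right {n : ℕ} (G : Matrix (Fin n) (Fin n) ℂ)
    (S : Fin n → Fin n → Fin n → Fin n → ℂ) (x y z w : Fin n) :
    tmul n S (one2 n G) x y z w = ∑ q' : Fin n, S x y z q' * G q' w := by
  simp only [tmul, one2]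
  rw [Finset.sum_comm]
  simp [mul_ite, mul_zero, Finset.sum_ite_eq']

theorem statement9' (n d : ℕ) (κ : ℂ)
    (U : Set (Snd n d)) (hU : IsOpen U)
    (φp φm : Snd n d → Matrix (Fin n) (Fin n) ℂ)
    (hφpd : ∀ k l, DifferentiableOn ℂ (fun q => φp q k l) U)
    (hφmd : ∀ k l, DifferentiableOn ℂ (fun q => φm q k l) U)
    (hφmu : ∀ p ∈ U, IsUnit (φm p).det)
    (hAp : ∀ p ∈ U, ∀ (i : Fin n) (α : Fin d) (k l : Fin n),
      brS n d κ (fun q => q.1 i α) (fun q => φp q k l) p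
        = -κ * ∑ j : Fin n, ∑ q' : Fin n, rME n i k j q' * p.1 j α * φp p q' l)
    (hAm : ∀ p ∈ U, ∀ (i : Fin n) (α : Fin d) (k l : Fin n),
      brS n d κ (fun q => q.1 i α) (fun q => φm q k l) p
        = -κ * ∑ j : Fin n, ∑ q' : Fin n, rPE n i k j q' * p.1 j α * φm p q' l)
    (hBp : ∀ p ∈ U, ∀ (α : Fin d) (i : Fin n) (k l : Fin n),
      brS n d κ (fun q => q.2 α i) (fun q => φp q k l) p
        = κ * ∑ m : Fin n, ∑ q' : Fin n, p.2 α m * rME n m k i q' * φp p q' l)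
    (hBm : ∀ p ∈ U, ∀ (α : Fin d) (i : Fin n) (k l : Fin n),
      brS n d κ (fun q => q.2 α i) (fun q => φm q k l) p
        = κ * ∑ m : Fin n, ∑ q' : Fin n, p.2 α m * rPE n m k i q' * φm p q' l) :
    (∀ p ∈ U, ∀ (i : Fin n) (α : Fin d) (k l : Fin n),
      brS n d κ (fun q => q.1 i α) (fun q => (φp q * (φm q)⁻¹) k l) p
        = κ * ∑ j : Fin n,
            (tmul n (one2 n (φp p * (φm p)⁻¹)) (rPE n) i k j l
              - tmul n (rME n) (one2 n (φp p * (φm p)⁻¹)) i k j l) * p.1 j α) ∧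
    (∀ p ∈ U, ∀ (α : Fin d) (i : Fin n) (k l : Fin n),
      brS n d κ (fun q => q.2 α i) (fun q => (φp q * (φm q)⁻¹) k l) p
        = κ * ∑ m : Fin n, p.2 α m *
            (tmul n (rME n) (one2 n (φp p * (φm p)⁻¹)) m k i l
              - tmul n (one2 n (φp p * (φm p)⁻¹)) (rPE n) m k i l)) := by
  constructor
  · intro p hp i α k l
    have hMI : ∀ (q' l' : Fin n), ∑ b : Fin n, φm p q' b * (φm p)⁻¹ b l'
        = if q' = l' then (1:ℂ) else 0 := by
      intro q' l'
      rw [← Matrix.mul_apply, Matrix.mul_nonsing_inv _ (hφmu p hp), Matrix.one_apply]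
    rw [prod_bracket (fun q => q.1 i α) hU hp hφpd hφmd hφmu k l]
    simp only [hAp p hp, hAm p hp]
    have e1 : ∑ m : Fin n, (-κ * ∑ j : Fin n, ∑ q' : Fin n,
          rME n i k j q' * p.1 j α * φp p q' m) * (φm p)⁻¹ m l
        = ∑ j : Fin n, -κ * (∑ q' : Fin n,
            rME n i k j q' * (φp p * (φm p)⁻¹) q' l) * p.1 j α := by
      rw [first_gen (-κ) (fun j q' => rME n i k j q' * p.1 j α) (φp p) ((φm p)⁻¹) l]
      exact sepA (-κ) (fun j q' => rME n i k j q') (fun j => p.1 j α)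
        (fun q' l' => (φp p * (φm p)⁻¹) q' l') l
    have h1 : ∀ a : Fin n, ∑ b : Fin n, (φp p * (φm p)⁻¹) k a
          * (-κ * ∑ j : Fin n, ∑ q' : Fin n,
              rPE n i a j q' * p.1 j α * φm p q' b) * (φm p)⁻¹ b l
        = (φp p * (φm p)⁻¹) k a * (-κ * ∑ j : Fin n, rPE n i a j l * p.1 j α) :=
      fun a => key_gen hMI _ (-κ) (fun j q' => rPE n i a j q' * p.1 j α) l
    have e2 : ∑ a : Fin n, ∑ b : Fin n, (φp p * (φm p)⁻¹) k a
          * (-κ * ∑ j : Fin n, ∑ q' : Fin n,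
              rPE n i a j q' * p.1 j α * φm p q' b) * (φm p)⁻¹ b l
        = ∑ j : Fin n, -κ * (∑ a : Fin n,
            (φp p * (φm p)⁻¹) k a * rPE n i a j l) * p.1 j α := by
      rw [Finset.sum_congr rfl fun a _ => h1 a]
      exact swapA (fun a => (φp p * (φm p)⁻¹) k a) (-κ)
        (fun a j => rPE n i a j l) (fun j => p.1 j α)
    rw [e1, e2]
    simp only [tmul_one2_left, tmul_one2_right]
    rw [Finset.mul_sum, ← Finset.sum_sub_distrib]
    exact Finset.sum_congr rfl fun j _ => by ring
  · intro p hp α i k l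
    have hMI : ∀ (q' l' : Fin n), ∑ b : Fin n, φm p q' b * (φm p)⁻¹ b l'
        = if q' = l' then (1:ℂ) else 0 := by
      intro q' l'
      rw [← Matrix.mul_apply, Matrix.mul_nonsing_inv _ (hφmu p hp), Matrix.one_apply]
    rw [prod_bracket (fun q => q.2 α i) hU hp hφpd hφmd hφmu k l]
    simp only [hBp p hp, hBm p hp]
    have e1 : ∑ m : Fin n, (κ * ∑ m' : Fin n, ∑ q' : Fin n,
          p.2 α m' * rME n m' k i q' * φp p q' m) * (φm p)⁻¹ m l
        = ∑ m' : Fin n, κ * (p.2 α m' * ∑ q' : Fin n,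
            rME n m' k i q' * (φp p * (φm p)⁻¹) q' l) := by
      rw [first_gen κ (fun m' q' => p.2 α m' * rME n m' k i q') (φp p) ((φm p)⁻¹) l]
      exact sepB κ (fun m' q' => rME n m' k i q') (fun m' => p.2 α m')
        (fun q' l' => (φp p * (φm p)⁻¹) q' l') l
    have h1 : ∀ a : Fin n, ∑ b : Fin n, (φp p * (φm p)⁻¹) k a
          * (κ * ∑ m' : Fin n, ∑ q' : Fin n,
              p.2 α m' * rPE n m' a i q' * φm p q' b) * (φm p)⁻¹ b l
        = (φp p * (φm p)⁻¹) k a * (κ * ∑ m' : Fin n, p.2 α m' * rPE n m' a i l) :=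
      fun a => key_gen hMI _ κ (fun m' q' => p.2 α m' * rPE n m' a i q') l
    have e2 : ∑ a : Fin n, ∑ b : Fin n, (φp p * (φm p)⁻¹) k a
          * (κ * ∑ m' : Fin n, ∑ q' : Fin n,
              p.2 α m' * rPE n m' a i q' * φm p q' b) * (φm p)⁻¹ b l
        = ∑ m' : Fin n, κ * (p.2 α m' * ∑ a : Fin n,
            (φp p * (φm p)⁻¹) k a * rPE n m' a i l) := by
      rw [Finset.sum_congr rfl fun a _ => h1 a]
      exact swapB (fun a => (φp p * (φm p)⁻¹) k a) κ
        (fun a m' => rPE n m' a i l) (fun m' => p.2 α m')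
    rw [e1, e2]
    simp only [tmul_one2_left, tmul_one2_right]
    rw [Finset.mul_sum, ← Finset.sum_sub_distrib]
    exact Finset.sum_congr rfl fun m' _ => by ring
/-- if `(φ₊,φ₋)` satisfies the componentwise moment-map relations, then
`φ = φ₊φ₋⁻¹` satisfies `{A₁,φ₂}_κ = κ(φ₂r₊ − r₋φ₂)A₁` and `{B₁,φ₂}_κ = κB₁(r₋φ₂ − φ₂r₊)`
on `U`. -/
theorem statement9 (n d : ℕ) (hn : 2 ≤ n) (hd : 1 ≤ d) (κ : ℂ) (hκ : κ ≠ 0)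
    (U : Set (Snd n d)) (hU : IsOpen U)
    (φp φm : Snd n d → Matrix (Fin n) (Fin n) ℂ)
    (hφpd : ∀ k l, DifferentiableOn ℂ (fun q => φp q k l) U)
    (hφmd : ∀ k l, DifferentiableOn ℂ (fun q => φm q k l) U)
    (hφpu : ∀ p ∈ U, IsUnit (φp p).det)
    (hφmu : ∀ p ∈ U, IsUnit (φm p).det)
    (hAp : ∀ p ∈ U, ∀ (i : Fin n) (α : Fin d) (k l : Fin n),
      brS n d κ (fun q => q.1 i α) (fun q => φp q k l) p
        = -κ * ∑ j : Fin n, ∑ q' : Fin n, rME n i k j q' * p.1 j α * φp p q' l)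
    (hAm : ∀ p ∈ U, ∀ (i : Fin n) (α : Fin d) (k l : Fin n),
      brS n d κ (fun q => q.1 i α) (fun q => φm q k l) p
        = -κ * ∑ j : Fin n, ∑ q' : Fin n, rPE n i k j q' * p.1 j α * φm p q' l)
    (hBp : ∀ p ∈ U, ∀ (α : Fin d) (i : Fin n) (k l : Fin n),
      brS n d κ (fun q => q.2 α i) (fun q => φp q k l) p
        = κ * ∑ m : Fin n, ∑ q' : Fin n, p.2 α m * rME n m k i q' * φp p q' l)
    (hBm : ∀ p ∈ U, ∀ (α : Fin d) (i : Fin n) (k l : Fin n),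
      brS n d κ (fun q => q.2 α i) (fun q => φm q k l) p
        = κ * ∑ m : Fin n, ∑ q' : Fin n, p.2 α m * rPE n m k i q' * φm p q' l) :
    (∀ p ∈ U, ∀ (i : Fin n) (α : Fin d) (k l : Fin n),
      brS n d κ (fun q => q.1 i α) (fun q => (φp q * (φm q)⁻¹) k l) p
        = κ * ∑ j : Fin n,
            (tmul n (one2 n (φp p * (φm p)⁻¹)) (rPE n) i k j l
              - tmul n (rME n) (one2 n (φp p * (φm p)⁻¹)) i k j l) * p.1 j α) ∧
    (∀ p ∈ U, ∀ (α : Fin d) (i : Fin n) (k l : Fin n),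
      brS n d κ (fun q => q.2 α i) (fun q => (φp q * (φm q)⁻¹) k l) p
        = κ * ∑ m : Fin n, p.2 α m *
            (tmul n (rME n) (one2 n (φp p * (φm p)⁻¹)) m k i l
              - tmul n (one2 n (φp p * (φm p)⁻¹)) (rPE n) m k i l)) := by
  exact statement9' n d κ U hU φp φm hφpd hφmd hφmu hAp hAm hBp hBm
end
end

section
/- Let n, d ≥ 1, κ ∈ ℂ∖{0}, c ∈ ℂ∖{0}, and let p = (A,B) ∈ S(n,d) be the point with A_{n1} = c, B_{1n} = −1/c (so 1 + A_n^1 B_n^1 = 0), and all other entries of A and B equal to zero. Let π(p) be the 2nd × 2nd antisymmetric matrix whose entries are the coordinate brackets {A_i^α, A_k^β}_κ, {A_i^α, B_k^β}_κ, {B_i^α, B_k^β}_κ evaluated at p. Then rank π(p) = 2(n−1)(d−1). In particular, for n, d ≥ 1 the Poisson bracket {·,·}_κ on S(n,d) is not nondegenerate at every point of S(n,d). -/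
open Matrix BigOperators

noncomputable section

attribute [local instance] Matrix.normedAddCommGroup Matrix.normedSpace

-- auxiliary lemmas
lemma auxAA0 {n d : ℕ} {κ c : ℂ} {p : Snd n d} {L : Fin n} {Z : Fin d}
    (hA : ∀ i α, p.1 i α = if i = L ∧ α = Z then c else 0)
    (i k : Fin n) (α β : Fin d) : pAA n d κ p i k α β = 0 := by
  unfold pAA
  rw [hA, hA]
  split_ifs with h1 h2
  · obtain ⟨rfl, rfl⟩ := h1
    obtain ⟨rfl, rfl⟩ := h2
    simp [csgn]
  · ring
  · ring
  · ring

lemma auxBB0 {n d : ℕ} {κ c : ℂ} {p : Snd n d} {L : Fin n} {Z : Fin d}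
    (hB : ∀ α i, p.2 α i = if i = L ∧ α = Z then -(1/c) else 0)
    (i k : Fin n) (α β : Fin d) : pBB n d κ p i k α β = 0 := by
  unfold pBB
  rw [hB, hB]
  split_ifs with h1 h2
  · obtain ⟨rfl, rfl⟩ := h1
    obtain ⟨rfl, rfl⟩ := h2
    simp [csgn]
  · ring
  · ring
  · ring

set_option maxHeartbeats 2000000 in
lemma auxpAB {n d : ℕ} {κ c : ℂ} (hc : c ≠ 0) {p : Snd n d} {L : Fin n} {Z : Fin d}
    (hLmax : ∀ i : Fin n, i < L ↔ i ≠ L) (hZmin : ∀ α : Fin d, Z < α ↔ α ≠ Z)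
    (hA : ∀ i α, p.1 i α = if i = L ∧ α = Z then c else 0)
    (hB : ∀ α i, p.2 α i = if i = L ∧ α = Z then -(1/c) else 0)
    (i k : Fin n) (α β : Fin d) :
    pAB n d κ p i α k β = if i = k ∧ α = β ∧ i ≠ L ∧ α ≠ Z then κ else 0 := by
  have s1 : (∑ s : Fin n, (if i < s then p.1 s α * p.2 β s else 0))
      = if i ≠ L ∧ α = Z ∧ β = Z then -1 else 0 := by
    rw [Finset.sum_eq_single_of_mem L (Finset.mem_univ L)
      (by intro b _ hb; rw [hA]; simp [hb])]
    rw [hA, hB]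
    simp only [hLmax i]
    by_cases h1 : i = L <;> by_cases h2 : α = Z <;> by_cases h3 : β = Z <;>
      simp [h1, h2, h3] <;> field_simp
  have s2 : (∑ μ : Fin d, (if μ < α then p.1 i μ * p.2 μ k else 0))
      = if α ≠ Z ∧ i = L ∧ k = L then -1 else 0 := by
    rw [Finset.sum_eq_single_of_mem Z (Finset.mem_univ Z)
      (by intro b _ hb; rw [hA]; simp [hb])]
    rw [hA, hB]
    simp only [hZmin α]
    by_cases h1 : α = Z <;> by_cases h2 : i = L <;> by_cases h3 : k = L <;>
      simp [h1, h2, h3] <;> field_simp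
  unfold pAB cdelta
  rw [s1, s2, hA i α, hB β k]
  clear s1 s2 hA hB hLmax hZmin
  split_ifs <;>
    first
      | (exfalso; simp_all; done)
      | (exfalso; tauto)
      | (field_simp; try ring; done)
      | (simp_all; done)
      | (simp_all; field_simp; try ring; done)

lemma cardNe {m : ℕ} (a : Fin m) : Fintype.card {x : Fin m // x ≠ a} = m - 1 := by
  have h1 : Fintype.card {x : Fin m // x ≠ a} = Fintype.card {x : Fin m // ¬ (x = a)} :=
    Fintype.card_congr (Equiv.subtypeEquivRight fun _ => Iff.rfl)
  rw [h1, Fintype.card_subtype_compl, Fintype.card_subtype_eq, Fintype.card_fin]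

set_option maxHeartbeats 1000000 in
/-- at the point `p` with `A_{n1} = c`, `B_{1n} = −1/c` and all other entries
zero, the Poisson bivector matrix has rank `2(n−1)(d−1)`; in particular the bracket `{·,·}_κ`
is degenerate at `p`. -/
theorem statement19 (n d : ℕ) (hn : 1 ≤ n) (hd : 1 ≤ d) (κ : ℂ) (hκ : κ ≠ 0)
    (c : ℂ) (hc : c ≠ 0)
    (p : Snd n d)
    (hp1 : p.1 = Matrix.of fun (i : Fin n) (α : Fin d) => if (i : ℕ) = n - 1 ∧ (α : ℕ) = 0 then c else 0)
    (hp2 : p.2 = Matrix.of fun (α : Fin d) (i : Fin n) => if (i : ℕ) = n - 1 ∧ (α : ℕ) = 0 then -(1 / c) else 0)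
    (piM : Matrix ((Fin n × Fin d) ⊕ (Fin n × Fin d)) ((Fin n × Fin d) ⊕ (Fin n × Fin d)) ℂ)
    (hAA : ∀ (i k : Fin n) (α β : Fin d),
      piM (Sum.inl (i, α)) (Sum.inl (k, β)) = pAA n d κ p i k α β)
    (hAB : ∀ (i k : Fin n) (α β : Fin d),
      piM (Sum.inl (i, α)) (Sum.inr (k, β)) = pAB n d κ p i α k β)
    (hBA : ∀ (i k : Fin n) (α β : Fin d),
      piM (Sum.inr (i, α)) (Sum.inl (k, β)) = -pAB n d κ p k β i α)
    (hBB : ∀ (i k : Fin n) (α β : Fin d),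
      piM (Sum.inr (i, α)) (Sum.inr (k, β)) = pBB n d κ p i k α β) :
    piM.rank = 2 * (n - 1) * (d - 1) ∧ ¬IsUnit piM.det := by
  classical
  have hn' : n - 1 < n := by omega
  have hd' : 0 < d := hd
  obtain ⟨L, hLval⟩ : ∃ L : Fin n, (L : ℕ) = n - 1 := ⟨⟨n - 1, hn'⟩, rfl⟩
  obtain ⟨Z, hZval⟩ : ∃ Z : Fin d, (Z : ℕ) = 0 := ⟨⟨0, hd'⟩, rfl⟩
  have hLmax : ∀ i : Fin n, i < L ↔ i ≠ L := by
    intro i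
    have := i.isLt
    rw [Fin.lt_def, Ne, Fin.ext_iff, hLval]
    omega
  have hZmin : ∀ α : Fin d, Z < α ↔ α ≠ Z := by
    intro α
    rw [Fin.lt_def, Ne, Fin.ext_iff, hZval]
    omega
  have hA : ∀ i α, p.1 i α = if i = L ∧ α = Z then c else 0 := by
    intro i α
    rw [hp1]
    have he : ((i : ℕ) = n - 1 ∧ (α : ℕ) = 0) ↔ (i = L ∧ α = Z) := by
      rw [Fin.ext_iff, Fin.ext_iff, hLval, hZval]
    simp [Matrix.of_apply, he]
  have hB : ∀ α i, p.2 α i = if i = L ∧ α = Z then -(1/c) else 0 := by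
    intro α i
    rw [hp2]
    have he : ((i : ℕ) = n - 1 ∧ (α : ℕ) = 0) ↔ (i = L ∧ α = Z) := by
      rw [Fin.ext_iff, Fin.ext_iff, hLval, hZval]
    simp [Matrix.of_apply, he]
  have hpAB := auxpAB (κ := κ) hc hLmax hZmin hA hB
  -- the diagonal function and the swap permutation
  set g : (Fin n × Fin d) ⊕ (Fin n × Fin d) → ℂ :=
    Sum.elim (fun x => if x.1 ≠ L ∧ x.2 ≠ Z then κ else 0)
             (fun x => if x.1 ≠ L ∧ x.2 ≠ Z then -κ else 0) with hg
  set σ : Equiv.Perm ((Fin n × Fin d) ⊕ (Fin n × Fin d)) :=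
    Equiv.sumComm (Fin n × Fin d) (Fin n × Fin d) with hσ
  have hpi : piM = Matrix.diagonal g * σ.permMatrix ℂ := by
    ext r s
    rw [Matrix.diagonal_mul]
    rcases r with ⟨i, α⟩ | ⟨i, α⟩ <;> rcases s with ⟨k, β⟩ | ⟨k, β⟩
    · rw [hAA i k α β, auxAA0 hA]
      simp [hσ, Equiv.Perm.permMatrix, PEquiv.toMatrix_apply, Equiv.toPEquiv_apply]
    · rw [hAB i k α β, hpAB i k α β]
      simp only [hg, hσ, Sum.elim_inl, Equiv.Perm.permMatrix, PEquiv.toMatrix_apply,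
        Equiv.toPEquiv_apply, Equiv.sumComm_apply, Sum.swap_inl, Option.mem_def,
        Option.some.injEq, Sum.inr.injEq, Prod.mk.injEq]
      split_ifs <;> simp_all <;> tauto
    · rw [hBA i k α β, hpAB k i β α]
      simp only [hg, hσ, Sum.elim_inr, Equiv.Perm.permMatrix, PEquiv.toMatrix_apply,
        Equiv.toPEquiv_apply, Equiv.sumComm_apply, Sum.swap_inr, Option.mem_def,
        Option.some.injEq, Sum.inl.injEq, Prod.mk.injEq]
      split_ifs <;> simp_all <;> tauto
    · rw [hBB i k α β, auxBB0 hB]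
      simp [hσ, Equiv.Perm.permMatrix, PEquiv.toMatrix_apply, Equiv.toPEquiv_apply]
  have hdetP : IsUnit (σ.permMatrix ℂ).det := by
    rw [Matrix.det_permutation]
    rcases Int.units_eq_one_or (Equiv.Perm.sign σ) with h | h <;> rw [h] <;>
      simp [isUnit_iff_ne_zero]
  have hcard : Fintype.card {r : (Fin n × Fin d) ⊕ (Fin n × Fin d) // g r ≠ 0}
      = 2 * ((n - 1) * (d - 1)) := by
    rw [Fintype.card_congr (Equiv.subtypeSum (p := fun r => g r ≠ 0)), Fintype.card_sum]
    have e1 : Fintype.card {a : Fin n × Fin d // g (Sum.inl a) ≠ 0}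
        = Fintype.card ({i : Fin n // i ≠ L} × {α : Fin d // α ≠ Z}) := by
      refine Fintype.card_congr (Equiv.trans (Equiv.subtypeEquivRight fun x => ?_)
        (Equiv.subtypeProdEquivProd))
      by_cases hx : x.1 ≠ L ∧ x.2 ≠ Z <;> simp [hg, hx, hκ]
    have e2 : Fintype.card {a : Fin n × Fin d // g (Sum.inr a) ≠ 0}
        = Fintype.card ({i : Fin n // i ≠ L} × {α : Fin d // α ≠ Z}) := by
      refine Fintype.card_congr (Equiv.trans (Equiv.subtypeEquivRight fun x => ?_)
        (Equiv.subtypeProdEquivProd))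
      by_cases hx : x.1 ≠ L ∧ x.2 ≠ Z <;> simp [hg, hx, hκ]
    rw [e1, e2, Fintype.card_prod, cardNe, cardNe]
    ring
  have hrank : piM.rank = 2 * (n - 1) * (d - 1) := by
    rw [hpi, Matrix.rank_mul_eq_left_of_isUnit_det _ _ hdetP, Matrix.rank_diagonal, hcard]
    ring
  refine ⟨hrank, ?_⟩
  have hrow : ∀ s, piM (Sum.inl (L, Z)) s = 0 := by
    rintro (⟨k, β⟩ | ⟨k, β⟩)
    · rw [hAA L k Z β]; exact auxAA0 hA L k Z β
    · rw [hAB L k Z β, hpAB L k Z β]; simp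
  have hdet0 : piM.det = 0 := Matrix.det_eq_zero_of_row_eq_zero (Sum.inl (L, Z)) hrow
  rw [hdet0]
  simp
end
end
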